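/- arXiv:2110.00255 — 3 statements merged into one kernel-verified Lean document; each statement's English description precedes it below -/
import Mathlib

section
/- Let O_C be the complexified octonions and z ∈ O_C a nonzero element with z·z̄ = 0. Then the subspaces L_z = zO_C and R_z = O_C z are isotropic of dimension 4 for the quadratic form given by the octonionic norm; moreover L_z equals the kernel of left multiplication by z̄ and R_z equals the kernel of right multiplication by z̄. -/
open Module

/-- A model of the complexified octonion algebra: an 8-dimensional complex vector space
with a bilinear (nonassociative) multiplication, unit, conjugation, and the
(polarized) multiplicative norm form, satisfying the standard octonion axioms
(alternativity, composition law, etc.). -/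
structure ComplexOctonionAlgebra (O : Type) [AddCommGroup O] [Module ℂ O] where
  mul : O →ₗ[ℂ] O →ₗ[ℂ] O
  one : O
  conj : O →ₗ[ℂ] O
  inner : O →ₗ[ℂ] O →ₗ[ℂ] ℂ
  dim_eq : finrank ℂ O = 8
  one_mul : ∀ x, mul one x = x
  mul_one : ∀ x, mul x one = x
  conj_conj : ∀ x, conj (conj x) = x
  conj_one : conj one = one
  conj_mul : ∀ x y, conj (mul x y) = mul (conj y) (conj x)
  inner_comm : ∀ x y, inner x y = inner y x
  inner_nondeg : ∀ x, (∀ y, inner x y = 0) → x = 0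
  mul_conj_self : ∀ x, mul x (conj x) = inner x x • one
  conj_mul_self : ∀ x, mul (conj x) x = inner x x • one
  polar : ∀ x y, mul x (conj y) + mul y (conj x) = (2 * inner x y) • one
  norm_mul : ∀ x y, inner (mul x y) (mul x y) = inner x x * inner y y
  alt_left : ∀ x y, mul x (mul x y) = mul (mul x x) y
  alt_right : ∀ x y, mul (mul x y) y = mul x (mul y y)

namespace ComplexOctonionAlgebra

variable {O : Type} [AddCommGroup O] [Module ℂ O]

lemma fd (A : ComplexOctonionAlgebra O) : FiniteDimensional ℂ O :=
  FiniteDimensional.of_finrank_pos (by rw [A.dim_eq]; norm_num)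

lemma one_ne_zero' (A : ComplexOctonionAlgebra O) : A.one ≠ 0 := by
  intro h
  have hall : ∀ x : O, x = 0 := fun x => by
    have h1 := A.one_mul x
    rw [h] at h1
    simpa using h1.symm
  have : Subsingleton O := ⟨fun a b => by rw [hall a, hall b]⟩
  have h0 : finrank ℂ O = 0 := finrank_zero_of_subsingleton
  rw [A.dim_eq] at h0
  exact absurd h0 (by norm_num)

lemma conj_eq (A : ComplexOctonionAlgebra O) (x : O) :
    A.conj x = (2 * A.inner x A.one) • A.one - x := by
  have h := A.polar x A.one
  rw [A.conj_one, A.mul_one, A.one_mul] at h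
  rw [eq_sub_iff_add_eq, add_comm]
  exact h

lemma sq_eq (A : ComplexOctonionAlgebra O) (z : O) :
    A.mul z z = (2 * A.inner z A.one) • z - (A.inner z z) • A.one := by
  have h := A.mul_conj_self z
  rw [A.conj_eq z, map_sub, map_smul, A.mul_one] at h
  rw [eq_sub_iff_add_eq, ← h]
  abel

/-- `z̄ (z w) = ⟨z,z⟩ w` -/
lemma left_key (A : ComplexOctonionAlgebra O) (z w : O) :
    A.mul (A.conj z) (A.mul z w) = (A.inner z z) • w := by
  set t := 2 * A.inner z A.one with ht
  have h1 : A.mul (A.conj z) (A.mul z w)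
      = t • (A.mul z w) - A.mul z (A.mul z w) := by
    rw [A.conj_eq z, ← ht, map_sub, LinearMap.sub_apply, map_smul,
      LinearMap.smul_apply, A.one_mul]
  rw [h1, A.alt_left, A.sq_eq, ← ht, map_sub, LinearMap.sub_apply, map_smul, map_smul,
    LinearMap.smul_apply, LinearMap.smul_apply, A.one_mul]
  abel

/-- `(w z) z̄ = ⟨z,z⟩ w` -/
lemma right_key (A : ComplexOctonionAlgebra O) (z w : O) :
    A.mul (A.mul w z) (A.conj z) = (A.inner z z) • w := by
  set t := 2 * A.inner z A.one with ht
  have h1 : A.mul (A.mul w z) (A.conj z)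
      = t • (A.mul w z) - A.mul (A.mul w z) z := by
    rw [A.conj_eq z, ← ht, map_sub, map_smul, A.mul_one]
  rw [h1, A.alt_right, A.sq_eq, ← ht, map_sub, map_smul, map_smul, A.mul_one]
  abel

/-- an isotropic subspace has dimension at most 4. -/
lemma isotropic_dim_le (A : ComplexOctonionAlgebra O) (W : Submodule ℂ O)
    (h : ∀ x ∈ W, A.inner x x = 0) : finrank ℂ W ≤ 4 := by
  haveI := A.fd
  set B : LinearMap.BilinForm ℂ O := A.inner with hB
  have hrefl : B.IsRefl := fun x y hxy => by
    rw [hB]; rw [A.inner_comm]; exact hxy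
  have hnd : B.Nondegenerate :=
    (LinearMap.IsRefl.nondegenerate_iff_separatingLeft hrefl).mpr A.inner_nondeg
  have hle : W ≤ B.orthogonal W := by
    intro x hx
    rw [LinearMap.BilinForm.mem_orthogonal_iff]
    intro n hn
    have h1 : A.inner (n + x) (n + x) = 0 := h _ (W.add_mem hn hx)
    have h2 : A.inner n n = 0 := h n hn
    have h3 : A.inner x x = 0 := h x hx
    have hsym : A.inner x n = A.inner n x := A.inner_comm x n
    have hexp : A.inner (n + x) (n + x)
        = A.inner n n + A.inner n x + A.inner x n + A.inner x x := by
      simp only [map_add, LinearMap.add_apply]; ring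
    rw [h1, h2, h3, hsym] at hexp
    show A.inner n x = 0
    linear_combination (-1/2 : ℂ) * hexp
  have heq : finrank ℂ (B.orthogonal W) = finrank ℂ O - finrank ℂ W :=
    LinearMap.BilinForm.finrank_orthogonal hnd W
  have hmono : finrank ℂ W ≤ finrank ℂ (B.orthogonal W) := Submodule.finrank_mono hle
  have hWle : finrank ℂ W ≤ finrank ℂ O := W.finrank_le
  rw [A.dim_eq] at heq hWle
  omega

/-- the main dimension count for an isotropic `z`. -/
lemma main_dims (A : ComplexOctonionAlgebra O) (z : O) (hz : z ≠ 0)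
    (hN : A.inner z z = 0) :
    finrank ℂ (LinearMap.range (A.mul z)) = 4 ∧
    finrank ℂ (LinearMap.ker (A.mul z)) = 4 ∧
    finrank ℂ (LinearMap.range (A.mul.flip z)) = 4 ∧
    finrank ℂ (LinearMap.ker (A.mul.flip z)) = 4 := by
  haveI := A.fd
  have hsum := LinearMap.finrank_range_add_finrank_ker (A.mul z)
  have hsum' := LinearMap.finrank_range_add_finrank_ker (A.mul.flip z)
  rw [A.dim_eq] at hsum hsum'
  have r1 : finrank ℂ (LinearMap.range (A.mul z)) ≤ 4 := by
    apply A.isotropic_dim_le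
    rintro x ⟨w, rfl⟩
    rw [A.norm_mul, hN, zero_mul]
  have k1 : finrank ℂ (LinearMap.ker (A.mul z)) ≤ 4 := by
    apply A.isotropic_dim_le
    intro x hx
    rw [LinearMap.mem_ker] at hx
    have hk := A.right_key x z
    rw [hx, map_zero, LinearMap.zero_apply] at hk
    rcases smul_eq_zero.mp hk.symm with h | h
    · exact h
    · exact absurd h hz
  have r2 : finrank ℂ (LinearMap.range (A.mul.flip z)) ≤ 4 := by
    apply A.isotropic_dim_le
    rintro x ⟨w, rfl⟩
    rw [LinearMap.flip_apply, A.norm_mul, hN, mul_zero]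
  have k2 : finrank ℂ (LinearMap.ker (A.mul.flip z)) ≤ 4 := by
    apply A.isotropic_dim_le
    intro x hx
    rw [LinearMap.mem_ker, LinearMap.flip_apply] at hx
    have hk := A.left_key x z
    rw [hx, map_zero] at hk
    rcases smul_eq_zero.mp hk.symm with h | h
    · exact h
    · exact absurd h hz
  omega

end ComplexOctonionAlgebra

/-- For a nonzero `z` in the complexified octonions with `z·z̄ = 0`,
the subspaces `L_z = z·O` and `R_z = O·z` are 4-dimensional and isotropic for the norm
form; moreover `L_z = ker` (left multiplication by `z̄`) and `R_z = ker` (right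
multiplication by `z̄`). -/
theorem stmt3 (O : Type) [AddCommGroup O] [Module ℂ O]
    (A : ComplexOctonionAlgebra O) (z : O) (hz : z ≠ 0)
    (hiso : A.mul z (A.conj z) = 0) :
    finrank ℂ (LinearMap.range (A.mul z)) = 4 ∧
    finrank ℂ (LinearMap.range (A.mul.flip z)) = 4 ∧
    (∀ x ∈ LinearMap.range (A.mul z), A.inner x x = 0) ∧
    (∀ x ∈ LinearMap.range (A.mul.flip z), A.inner x x = 0) ∧
    LinearMap.range (A.mul z) = LinearMap.ker (A.mul (A.conj z)) ∧
    LinearMap.range (A.mul.flip z) = LinearMap.ker (A.mul.flip (A.conj z)) := by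
  haveI := A.fd
  have hNz : A.inner z z = 0 := by
    have h := A.mul_conj_self z
    rw [hiso] at h
    rcases smul_eq_zero.mp h.symm with h' | h'
    · exact h'
    · exact absurd h' A.one_ne_zero'
  have hzc : A.conj z ≠ 0 := fun h => hz (by rw [← A.conj_conj z, h, map_zero])
  have hNzc : A.inner (A.conj z) (A.conj z) = 0 := by
    have h := A.mul_conj_self (A.conj z)
    rw [A.conj_conj, A.conj_mul_self, hNz, zero_smul] at h
    rcases smul_eq_zero.mp h.symm with h' | h'
    · exact h'
    · exact absurd h' A.one_ne_zero'
  obtain ⟨d1, d2, d3, d4⟩ := A.main_dims z hz hNz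
  obtain ⟨e1, e2, e3, e4⟩ := A.main_dims (A.conj z) hzc hNzc
  refine ⟨d1, d3, ?_, ?_, ?_, ?_⟩
  · rintro x ⟨w, rfl⟩
    rw [A.norm_mul, hNz, zero_mul]
  · rintro x ⟨w, rfl⟩
    rw [LinearMap.flip_apply, A.norm_mul, hNz, mul_zero]
  · apply Submodule.eq_of_le_of_finrank_eq
    · rintro x ⟨w, rfl⟩
      rw [LinearMap.mem_ker]
      rw [A.left_key, hNz, zero_smul]
    · rw [d1, e2]
  · apply Submodule.eq_of_le_of_finrank_eq
    · rintro x ⟨w, rfl⟩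
      rw [LinearMap.mem_ker, LinearMap.flip_apply, LinearMap.flip_apply]
      rw [A.right_key, hNz, zero_smul]
    · rw [d3, e4]
end

section
/- In the root system F_4 with simple roots α_1, α_2 (long) and α_3, α_4 (short) in Bourbaki numbering, the orthogonal complement of the span of α_3 and α_4 inside the Cartan space is spanned by α_1 and β := α_1 + 3α_2 + 4α_3 + 2α_4; moreover both R ∩ span(α_3,α_4) and R ∩ span(α_1,β) are root subsystems of type A_2. -/
open Matrix

/-- The root system of type `F₄` in `ℝ⁴` (Bourbaki conventions): the long roots
`±eᵢ±eⱼ`, the short roots `±eᵢ`, and the short roots `(±1,±1,±1,±1)/2`. -/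
def F4Roots : Set (Fin 4 → ℝ) :=
  {v | ((∀ i, v i = 0 ∨ v i = 1 ∨ v i = -1) ∧ {i | v i ≠ 0}.ncard = 2) ∨
       ((∀ i, v i = 0 ∨ v i = 1 ∨ v i = -1) ∧ {i | v i ≠ 0}.ncard = 1) ∨
       (∀ i, v i = 1 / 2 ∨ v i = -1 / 2)}

/-- A set of vectors forms a root system of type `A₂`: six roots
`{±γ, ±δ, ±(γ+δ)}` with `γ, δ` of equal length at `120°`. -/
def IsA2Subsystem (S : Set (Fin 4 → ℝ)) : Prop :=
  ∃ γ δ : Fin 4 → ℝ, γ ≠ 0 ∧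
    S = {γ, δ, γ + δ, -γ, -δ, -(γ + δ)} ∧
    γ ⬝ᵥ γ = δ ⬝ᵥ δ ∧ 2 * (γ ⬝ᵥ δ) = -(γ ⬝ᵥ γ)

lemma ncard_support (v : Fin 4 → ℝ) (s : Finset (Fin 4)) (h : ∀ i, v i ≠ 0 ↔ i ∈ s) :
    {i | v i ≠ 0}.ncard = s.card := by
  have hs : {i | v i ≠ 0} = ↑s := by ext i; simpa using h i
  rw [hs, Set.ncard_coe_finset]

lemma three_le_ncard (v : Fin 4 → ℝ) (h0 : v 0 ≠ 0) (h1 : v 1 ≠ 0) (h2 : v 2 ≠ 0) :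
    3 ≤ {i | v i ≠ 0}.ncard := by
  have hsub : (↑({0,1,2} : Finset (Fin 4)) : Set (Fin 4)) ⊆ {i | v i ≠ 0} := by
    intro i hi
    simp only [Finset.coe_insert, Finset.coe_singleton, Set.mem_insert_iff,
      Set.mem_singleton_iff] at hi
    rcases hi with rfl | rfl | rfl <;> assumption
  have h := Set.ncard_le_ncard hsub (Set.toFinite _)
  rwa [Set.ncard_coe_finset] at h

lemma span34 : (Submodule.span ℝ {(![0,0,0,1] : Fin 4 → ℝ), ![1/2,-1/2,-1/2,-1/2]} : Set (Fin 4 → ℝ))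
    = {v | v 1 = -v 0 ∧ v 2 = -v 0} := by
  ext v
  simp only [SetLike.mem_coe, Submodule.mem_span_pair, Set.mem_setOf_eq]
  constructor
  · rintro ⟨m, n, rfl⟩
    constructor <;> simp <;> ring
  · rintro ⟨h1, h2⟩
    exact ⟨v 3 + v 0, 2 * v 0, by
      funext i; fin_cases i <;> simp [h1, h2] <;> ring⟩

lemma span1b : (Submodule.span ℝ {(![0,1,-1,0] : Fin 4 → ℝ), ![1,0,1,0]} : Set (Fin 4 → ℝ))
    = {v | v 3 = 0 ∧ v 0 = v 1 + v 2} := by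
  ext v
  simp only [SetLike.mem_coe, Submodule.mem_span_pair, Set.mem_setOf_eq]
  constructor
  · rintro ⟨m, n, rfl⟩
    constructor <;> simp <;> ring
  · rintro ⟨h1, h2⟩
    exact ⟨v 1, v 0, by
      funext i; fin_cases i <;> simp [h1] <;> linarith⟩

lemma part2set : F4Roots ∩ {v : Fin 4 → ℝ | v 1 = -v 0 ∧ v 2 = -v 0} =
    ({![0,0,0,1], ![1/2,-1/2,-1/2,-1/2], ![1/2,-1/2,-1/2,1/2],
      ![0,0,0,-1], ![-1/2,1/2,1/2,1/2], ![-1/2,1/2,1/2,-1/2]} : Set (Fin 4 → ℝ)) := by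
  ext v
  simp only [Set.mem_inter_iff, Set.mem_setOf_eq, Set.mem_insert_iff, Set.mem_singleton_iff]
  constructor
  · rintro ⟨hR, h1, h2⟩
    have key : (∀ i, v i = 0 ∨ v i = 1 ∨ v i = -1) →
        ({i | v i ≠ 0}.ncard = 2 ∨ {i | v i ≠ 0}.ncard = 1) →
        (v = ![0,0,0,1] ∨ v = ![0,0,0,-1]) := by
      intro hint hc
      rcases hint 0 with h0 | h0 | h0
      · rw [h0, neg_zero] at h1 h2
        rcases hint 3 with h3 | h3 | h3
        · exfalso
          have := ncard_support v ∅ (by intro i; fin_cases i <;> simp [h0, h1, h2, h3])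
          simp [this] at hc
        · exact Or.inl (funext fun i => by fin_cases i <;> simp [h0, h1, h2, h3])
        · exact Or.inr (funext fun i => by fin_cases i <;> simp [h0, h1, h2, h3])
      all_goals
        exfalso
        have hge := three_le_ncard v (by rw [h0]; norm_num)
          (by rw [h1, h0]; norm_num) (by rw [h2, h0]; norm_num)
        omega
    rcases hR with ⟨hint, hc⟩ | ⟨hint, hc⟩ | hhalf
    · rcases key hint (Or.inl hc) with rfl | rfl
      · exact Or.inl rfl
      · exact Or.inr (Or.inr (Or.inr (Or.inl rfl)))
    · rcases key hint (Or.inr hc) with rfl | rfl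
      · exact Or.inl rfl
      · exact Or.inr (Or.inr (Or.inr (Or.inl rfl)))
    · rcases hhalf 0 with h0 | h0 <;> rcases hhalf 3 with h3 | h3 <;>
        rw [h0] at h1 h2
      · exact Or.inr (Or.inr (Or.inl (funext fun i => by
          fin_cases i <;> simp [h0, h1, h2, h3] <;> norm_num)))
      · exact Or.inr (Or.inl (funext fun i => by
          fin_cases i <;> simp [h0, h1, h2, h3] <;> norm_num))
      · exact Or.inr (Or.inr (Or.inr (Or.inr (Or.inl (funext fun i => by
          fin_cases i <;> simp [h0, h1, h2, h3] <;> norm_num)))))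
      · exact Or.inr (Or.inr (Or.inr (Or.inr (Or.inr (funext fun i => by
          fin_cases i <;> simp [h0, h1, h2, h3] <;> norm_num)))))
  · have e4 : (![0,0,0,(1:ℝ)]) ∈ F4Roots := Or.inr (Or.inl ⟨by intro i; fin_cases i <;> norm_num,
      by rw [ncard_support _ {3} (by intro i; fin_cases i <;> norm_num <;> decide), Finset.card_singleton]⟩)
    have e4' : (![0,0,0,(-1:ℝ)]) ∈ F4Roots := Or.inr (Or.inl ⟨by intro i; fin_cases i <;> norm_num,
      by rw [ncard_support _ {3} (by intro i; fin_cases i <;> norm_num <;> decide), Finset.card_singleton]⟩)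
    rintro (rfl | rfl | rfl | rfl | rfl | rfl)
    · exact ⟨e4, by norm_num [Matrix.cons_val_two, Matrix.cons_val_three], by norm_num [Matrix.cons_val_two, Matrix.cons_val_three]⟩
    · exact ⟨Or.inr (Or.inr (by intro i; fin_cases i <;> norm_num)), by norm_num [Matrix.cons_val_two, Matrix.cons_val_three], by norm_num [Matrix.cons_val_two, Matrix.cons_val_three]⟩
    · exact ⟨Or.inr (Or.inr (by intro i; fin_cases i <;> norm_num)), by norm_num [Matrix.cons_val_two, Matrix.cons_val_three], by norm_num [Matrix.cons_val_two, Matrix.cons_val_three]⟩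
    · exact ⟨e4', by norm_num [Matrix.cons_val_two, Matrix.cons_val_three], by norm_num [Matrix.cons_val_two, Matrix.cons_val_three]⟩
    · exact ⟨Or.inr (Or.inr (by intro i; fin_cases i <;> norm_num)), by norm_num [Matrix.cons_val_two, Matrix.cons_val_three], by norm_num [Matrix.cons_val_two, Matrix.cons_val_three]⟩
    · exact ⟨Or.inr (Or.inr (by intro i; fin_cases i <;> norm_num)), by norm_num [Matrix.cons_val_two, Matrix.cons_val_three], by norm_num [Matrix.cons_val_two, Matrix.cons_val_three]⟩

lemma part3set : F4Roots ∩ {v : Fin 4 → ℝ | v 3 = 0 ∧ v 0 = v 1 + v 2} =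
    ({![0,1,-1,0], ![1,0,1,0], ![1,1,0,0],
      ![0,-1,1,0], ![-1,0,-1,0], ![-1,-1,0,0]} : Set (Fin 4 → ℝ)) := by
  ext v
  simp only [Set.mem_inter_iff, Set.mem_setOf_eq, Set.mem_insert_iff, Set.mem_singleton_iff]
  constructor
  · rintro ⟨hR, h3, hsum⟩
    have h2 : v 2 = v 0 - v 1 := by linarith
    have key : (∀ i, v i = 0 ∨ v i = 1 ∨ v i = -1) →
        ({i | v i ≠ 0}.ncard = 2 ∨ {i | v i ≠ 0}.ncard = 1) →
        (v = ![0,1,-1,0] ∨ v = ![1,0,1,0] ∨ v = ![1,1,0,0] ∨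
         v = ![0,-1,1,0] ∨ v = ![-1,0,-1,0] ∨ v = ![-1,-1,0,0]) := by
      intro hint hc
      rcases hint 0 with h0 | h0 | h0 <;> rcases hint 1 with h1 | h1 | h1 <;>
        rw [h0, h1] at h2
      · exfalso
        have := ncard_support v ∅ (by intro i; fin_cases i <;> simp [h0, h1, h2, h3])
        simp [this] at hc
      · exact Or.inl (funext fun i => by fin_cases i <;> simp [h0, h1, h2, h3] <;> norm_num)
      · exact Or.inr (Or.inr (Or.inr (Or.inl (funext fun i => by
          fin_cases i <;> simp [h0, h1, h2, h3] <;> norm_num))))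
      · exact Or.inr (Or.inl (funext fun i => by
          fin_cases i <;> simp [h0, h1, h2, h3] <;> norm_num))
      · exact Or.inr (Or.inr (Or.inl (funext fun i => by
          fin_cases i <;> simp [h0, h1, h2, h3] <;> norm_num)))
      · exfalso; rcases hint 2 with h | h | h <;> rw [h2] at h <;> norm_num at h
      · exact Or.inr (Or.inr (Or.inr (Or.inr (Or.inl (funext fun i => by
          fin_cases i <;> simp [h0, h1, h2, h3] <;> norm_num)))))
      · exfalso; rcases hint 2 with h | h | h <;> rw [h2] at h <;> norm_num at h
      · exact Or.inr (Or.inr (Or.inr (Or.inr (Or.inr (funext fun i => by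
          fin_cases i <;> simp [h0, h1, h2, h3] <;> norm_num)))))
    rcases hR with ⟨hint, hc⟩ | ⟨hint, hc⟩ | hhalf
    · exact key hint (Or.inl hc)
    · exact key hint (Or.inr hc)
    · exfalso; rcases hhalf 3 with h | h <;> rw [h3] at h <;> norm_num at h
  · rintro (rfl | rfl | rfl | rfl | rfl | rfl) <;>
      refine ⟨Or.inl ⟨by intro i; fin_cases i <;> norm_num, ?_⟩, by norm_num [Matrix.cons_val_two, Matrix.cons_val_three], by norm_num [Matrix.cons_val_two, Matrix.cons_val_three]⟩
    · rw [ncard_support _ {1,2} (by intro i; fin_cases i <;> norm_num <;> decide)]; decide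
    · rw [ncard_support _ {0,2} (by intro i; fin_cases i <;> norm_num <;> decide)]; decide
    · rw [ncard_support _ {0,1} (by intro i; fin_cases i <;> norm_num <;> decide)]; decide
    · rw [ncard_support _ {1,2} (by intro i; fin_cases i <;> norm_num <;> decide)]; decide
    · rw [ncard_support _ {0,2} (by intro i; fin_cases i <;> norm_num <;> decide)]; decide
    · rw [ncard_support _ {0,1} (by intro i; fin_cases i <;> norm_num <;> decide)]; decide

lemma part1 : {v : Fin 4 → ℝ | v ⬝ᵥ ![0,0,0,1] = 0 ∧ v ⬝ᵥ ![1/2,-1/2,-1/2,-1/2] = 0} =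
    (Submodule.span ℝ {(![0,1,-1,0] : Fin 4 → ℝ), ![1,0,1,0]} : Set (Fin 4 → ℝ)) := by
  rw [span1b]
  ext v
  simp only [Set.mem_setOf_eq, dotProduct, Fin.sum_univ_four, Matrix.cons_val_zero,
    Matrix.cons_val_one, Matrix.head_cons, Matrix.cons_val_two, Matrix.tail_cons,
    Matrix.cons_val_three]
  constructor <;> rintro ⟨a, b⟩ <;> exact ⟨by linarith, by linarith⟩

lemma A2_2 : IsA2Subsystem (F4Roots ∩
    (Submodule.span ℝ {(![0,0,0,1] : Fin 4 → ℝ), ![1/2,-1/2,-1/2,-1/2]} : Set (Fin 4 → ℝ))) := by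
  refine ⟨![0,0,0,1], ![1/2,-1/2,-1/2,-1/2], ?_, ?_, ?_, ?_⟩
  · intro h; have := congrFun h 3; norm_num [Matrix.cons_val_two, Matrix.cons_val_three] at this
  · rw [span34, part2set]
    have h1 : (![0,0,0,1] + ![1/2,-1/2,-1/2,-1/2] : Fin 4 → ℝ) = ![1/2,-1/2,-1/2,1/2] := by
      funext i; fin_cases i <;> norm_num
    have h2 : (-![0,0,0,1] : Fin 4 → ℝ) = ![0,0,0,-1] := by funext i; fin_cases i <;> norm_num
    have h3 : (-![1/2,-1/2,-1/2,-1/2] : Fin 4 → ℝ) = ![-1/2,1/2,1/2,1/2] := by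
      funext i; fin_cases i <;> norm_num
    have h4 : (-![1/2,-1/2,-1/2,1/2] : Fin 4 → ℝ) = ![-1/2,1/2,1/2,-1/2] := by
      funext i; fin_cases i <;> norm_num
    rw [h1, h2, h3, h4]
  · norm_num [dotProduct, Fin.sum_univ_four, Matrix.cons_val_two, Matrix.cons_val_three]
  · norm_num [dotProduct, Fin.sum_univ_four, Matrix.cons_val_two, Matrix.cons_val_three]

lemma A2_3 : IsA2Subsystem (F4Roots ∩
    (Submodule.span ℝ {(![0,1,-1,0] : Fin 4 → ℝ), ![1,0,1,0]} : Set (Fin 4 → ℝ))) := by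
  refine ⟨![0,1,-1,0], ![1,0,1,0], ?_, ?_, ?_, ?_⟩
  · intro h; have := congrFun h 1; norm_num at this
  · rw [span1b, part3set]
    have h1 : (![0,1,-1,0] + ![1,0,1,0] : Fin 4 → ℝ) = ![1,1,0,0] := by
      funext i; fin_cases i <;> norm_num
    have h2 : (-![0,1,-1,0] : Fin 4 → ℝ) = ![0,-1,1,0] := by funext i; fin_cases i <;> norm_num
    have h3 : (-![1,0,1,0] : Fin 4 → ℝ) = ![-1,0,-1,0] := by funext i; fin_cases i <;> norm_num
    have h4 : (-![1,1,0,0] : Fin 4 → ℝ) = ![-1,-1,0,0] := by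
      funext i; fin_cases i <;> norm_num
    rw [h1, h2, h3, h4]
  · norm_num [dotProduct, Fin.sum_univ_four, Matrix.cons_val_two, Matrix.cons_val_three]
  · norm_num [dotProduct, Fin.sum_univ_four, Matrix.cons_val_two, Matrix.cons_val_three]

/-- In `F₄` with simple roots `α₁ = e₂-e₃`, `α₂ = e₃-e₄` (long) and
`α₃ = e₄`, `α₄ = (e₁-e₂-e₃-e₄)/2` (short), the orthogonal complement of
`span(α₃,α₄)` is spanned by `α₁` and `β := α₁+3α₂+4α₃+2α₄`, and both
`R ∩ span(α₃,α₄)` and `R ∩ span(α₁,β)` are root subsystems of type `A₂`. -/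
theorem stmt13 :
    let α₁ : Fin 4 → ℝ := ![0, 1, -1, 0]
    let α₂ : Fin 4 → ℝ := ![0, 0, 1, -1]
    let α₃ : Fin 4 → ℝ := ![0, 0, 0, 1]
    let α₄ : Fin 4 → ℝ := ![1 / 2, -1 / 2, -1 / 2, -1 / 2]
    let β : Fin 4 → ℝ := α₁ + (3 : ℝ) • α₂ + (4 : ℝ) • α₃ + (2 : ℝ) • α₄
    ({v : Fin 4 → ℝ | v ⬝ᵥ α₃ = 0 ∧ v ⬝ᵥ α₄ = 0} =
        (Submodule.span ℝ {α₁, β} : Set (Fin 4 → ℝ))) ∧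
    IsA2Subsystem (F4Roots ∩ (Submodule.span ℝ {α₃, α₄} : Set (Fin 4 → ℝ))) ∧
    IsA2Subsystem (F4Roots ∩ (Submodule.span ℝ {α₁, β} : Set (Fin 4 → ℝ))) := by
  intro α₁ α₂ α₃ α₄ β
  have hβ : β = ![1,0,1,0] := by
    funext i
    fin_cases i <;> simp [β, α₁, α₂, α₃, α₄] <;> norm_num
  rw [hβ]
  exact ⟨part1, A2_2, A2_3⟩
end

section
/- In the Weyl group of F_4, no element acts as an outer automorphism on the A_2 root subsystem R ∩ span(α_3,α_4) while acting as an inner automorphism (an element of the A_2 Weyl group) on the orthogonal A_2 subsystem R ∩ span(α_1,β), nor vice versa. -/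
open Matrix

attribute [local simp] Matrix.cons_val_two Matrix.cons_val_three

/-- The reflection in the root `α`, as a linear endomorphism of `ℝ⁴`. -/
noncomputable def reflLM (α : Fin 4 → ℝ) : Module.End ℝ (Fin 4 → ℝ) :=
  LinearMap.id - (2 / (α ⬝ᵥ α)) •
    (LinearMap.smulRight
      (⟨⟨fun v => v ⬝ᵥ α, by intros; simp [add_dotProduct]⟩,
        by intros; simp [smul_dotProduct]⟩ : (Fin 4 → ℝ) →ₗ[ℝ] ℝ) α)

/-- `g` acts as an inner automorphism on the root subsystem `S`:
on the span of `S` it agrees with an element of the Weyl group generated by the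
reflections in the roots of `S`. -/
def ActsInnerOn (g : Module.End ℝ (Fin 4 → ℝ)) (S : Set (Fin 4 → ℝ)) : Prop :=
  ∃ h ∈ Submonoid.closure {k : Module.End ℝ (Fin 4 → ℝ) | ∃ γ ∈ S, k = reflLM γ},
    ∀ v ∈ Submodule.span ℝ S, g v = h v

/-- `g` acts as an outer automorphism on the root subsystem `S`: it maps `S` to
itself but does not act as an inner automorphism. -/
def ActsOuterOn (g : Module.End ℝ (Fin 4 → ℝ)) (S : Set (Fin 4 → ℝ)) : Prop :=
  (∀ v ∈ S, g v ∈ S) ∧ ¬ ActsInnerOn g S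

lemma reflLM_apply (α v : Fin 4 → ℝ) :
    reflLM α v = v - (2 * (v ⬝ᵥ α) / (α ⬝ᵥ α)) • α := by
  simp [reflLM, LinearMap.smul_apply, LinearMap.smulRight_apply, smul_smul]
  ring_nf
  try rfl

lemma pm_int (α : Fin 4 → ℝ) (h : ∀ i, α i = 0 ∨ α i = 1 ∨ α i = -1) :
    ∃ a : Fin 4 → ℤ, (∀ i, α i = (a i : ℝ)) ∧ (∀ i, a i = 0 ∨ a i = 1 ∨ a i = -1) := by
  have : ∀ i, ∃ n : ℤ, α i = (n : ℝ) ∧ (n = 0 ∨ n = 1 ∨ n = -1) := by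
    intro i
    rcases h i with h'|h'|h'
    · exact ⟨0, by norm_num [h']⟩
    · exact ⟨1, by norm_num [h']⟩
    · exact ⟨-1, by norm_num [h']⟩
  choose a ha1 ha2 using this
  exact ⟨a, ha1, ha2⟩

lemma ncard_dot (α : Fin 4 → ℝ) (h : ∀ i, α i = 0 ∨ α i = 1 ∨ α i = -1) :
    α ⬝ᵥ α = ({i | α i ≠ 0}.ncard : ℝ) := by
  classical
  have h1 : {i | α i ≠ 0}.ncard = (Finset.univ.filter (fun i => α i ≠ 0)).card := by
    rw [Set.ncard_eq_toFinset_card']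
    congr 1
    ext i
    simp
  rw [h1, Finset.card_filter]
  push_cast
  rw [dotProduct]
  apply Finset.sum_congr rfl
  intro i _
  rcases h i with h'|h'|h' <;> simp [h']

lemma refl_dot (α : Fin 4 → ℝ) (hα : α ⬝ᵥ α ≠ 0) (u v : Fin 4 → ℝ) :
    (reflLM α u) ⬝ᵥ (reflLM α v) = u ⬝ᵥ v := by
  rw [reflLM_apply, reflLM_apply]
  rw [sub_dotProduct, dotProduct_sub, dotProduct_sub,
    smul_dotProduct, dotProduct_smul, smul_dotProduct,
    dotProduct_smul]
  simp only [smul_eq_mul]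
  field_simp
  rw [dotProduct_comm α v]
  ring

lemma F4_dot_self_ne (α : Fin 4 → ℝ) (hα : α ∈ F4Roots) : α ⬝ᵥ α ≠ 0 := by
  rcases hα with ⟨h, hc⟩|⟨h, hc⟩|h
  · rw [ncard_dot α h, hc]; norm_num
  · rw [ncard_dot α h, hc]; norm_num
  · have : α ⬝ᵥ α = 1 := by
      rw [dotProduct, Fin.sum_univ_four]
      rcases h 0 with h0|h0 <;> rcases h 1 with h1|h1 <;> rcases h 2 with h2|h2 <;>
        rcases h 3 with h3|h3 <;> rw [h0, h1, h2, h3] <;> norm_num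
    rw [this]; norm_num

def InL (v : Fin 4 → ℝ) : Prop := ∀ i j : Fin 4, ∃ n : ℤ, v i + v j = (n : ℝ)

lemma InL_diff {v : Fin 4 → ℝ} (hv : InL v) (i j : Fin 4) : ∃ d : ℤ, v i = v j + (d : ℝ) := by
  obtain ⟨n, hn⟩ := hv i j
  obtain ⟨m, hm⟩ := hv j j
  exact ⟨n - m, by push_cast; linarith⟩

lemma refl_preserves_InL {α : Fin 4 → ℝ} (hα : α ∈ F4Roots) {v : Fin 4 → ℝ} (hv : InL v) :
    InL (reflLM α v) := by
  have hd := InL_diff hv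
  obtain ⟨n0, hn0⟩ := hv 0 0
  have key : ∀ i j : Fin 4, ∃ m : ℤ, (2 * (v ⬝ᵥ α) / (α ⬝ᵥ α)) * (α i + α j) = (m : ℝ) := by
    obtain ⟨d0, hd0⟩ := hd 0 0
    obtain ⟨d1, hd1⟩ := hd 1 0
    obtain ⟨d2, hd2⟩ := hd 2 0
    obtain ⟨d3, hd3⟩ := hd 3 0
    rcases hα with ⟨h, hc⟩|⟨h, hc⟩|h
    · have hdot : α ⬝ᵥ α = 2 := by rw [ncard_dot α h, hc]; norm_num
      obtain ⟨a, ha, hpm⟩ := pm_int α h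
      have hsq : (a 0)^2 + (a 1)^2 + (a 2)^2 + (a 3)^2 = 2 := by
        have h2 : α ⬝ᵥ α = (((a 0)^2 + (a 1)^2 + (a 2)^2 + (a 3)^2 : ℤ) : ℝ) := by
          rw [dotProduct, Fin.sum_univ_four, ha 0, ha 1, ha 2, ha 3]; push_cast; ring
        rw [hdot] at h2; exact_mod_cast h2.symm
      have hb : ∀ k, ∃ b : ℤ, a k = (a k)^2 + 2*b := by
        intro k; rcases hpm k with h'|h'|h' <;> rw [h']
        exacts [⟨0, by ring⟩, ⟨0, by ring⟩, ⟨-1, by ring⟩]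
      obtain ⟨b0, hb0⟩ := hb 0
      obtain ⟨b1, hb1⟩ := hb 1
      obtain ⟨b2, hb2⟩ := hb 2
      obtain ⟨b3, hb3⟩ := hb 3
      have hsum : a 0 + a 1 + a 2 + a 3 = 2 * (1 + (b0+b1+b2+b3)) := by omega
      have hsumR : ((a 0 : ℝ)) + a 1 + a 2 + a 3 = 2 * (1 + ((b0:ℝ)+b1+b2+b3)) := by
        exact_mod_cast congrArg (fun z : ℤ => (z : ℝ)) hsum
      have hcint : v ⬝ᵥ α = ((a 0 * d0 + a 1 * d1 + a 2 * d2 + a 3 * d3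
          + (1 + (b0+b1+b2+b3)) * n0 : ℤ) : ℝ) := by
        rw [dotProduct, Fin.sum_univ_four, ha 0, ha 1, ha 2, ha 3,
          hd0, hd1, hd2, hd3]
        push_cast
        linear_combination (v 0) * hsumR + (1 + ((b0:ℝ)+b1+b2+b3)) * hn0
      intro i j
      refine ⟨(a 0 * d0 + a 1 * d1 + a 2 * d2 + a 3 * d3
          + (1 + (b0+b1+b2+b3)) * n0) * (a i + a j), ?_⟩
      rw [hdot, hcint, ha i, ha j]
      push_cast
      ring
    · have hdot : α ⬝ᵥ α = 1 := by rw [ncard_dot α h, hc]; norm_num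
      obtain ⟨a, ha, hpm⟩ := pm_int α h
      obtain ⟨m0, hm0⟩ := hv 0 0
      obtain ⟨m1, hm1⟩ := hv 1 1
      obtain ⟨m2, hm2⟩ := hv 2 2
      obtain ⟨m3, hm3⟩ := hv 3 3
      have hcint : 2 * (v ⬝ᵥ α) = ((a 0 * m0 + a 1 * m1 + a 2 * m2 + a 3 * m3 : ℤ) : ℝ) := by
        rw [dotProduct, Fin.sum_univ_four, ha 0, ha 1, ha 2, ha 3]
        push_cast
        linear_combination ((a 0 : ℝ)) * hm0 + ((a 1 : ℝ)) * hm1 + ((a 2 : ℝ)) * hm2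
          + ((a 3 : ℝ)) * hm3
      intro i j
      refine ⟨(a 0 * m0 + a 1 * m1 + a 2 * m2 + a 3 * m3) * (a i + a j), ?_⟩
      rw [hdot, div_one, hcint, ha i, ha j]
      push_cast
      ring
    · have hpick : ∀ k, ∃ s : ℤ, α k = (s:ℝ)/2 ∧ (s = 1 ∨ s = -1) := by
        intro k; rcases h k with h'|h'
        exacts [⟨1, by norm_num [h']⟩, ⟨-1, by norm_num [h']⟩]
      choose s hs hspm using hpick
      have sq : ∀ k, ((s k : ℝ)) * (s k) = 1 := by
        intro k; rcases hspm k with h'|h' <;> rw [h'] <;> norm_num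
      have hdot : α ⬝ᵥ α = 1 := by
        rw [dotProduct, Fin.sum_univ_four, hs 0, hs 1, hs 2, hs 3]
        linear_combination (1/4 : ℝ) * sq 0 + (1/4 : ℝ) * sq 1 + (1/4 : ℝ) * sq 2
          + (1/4 : ℝ) * sq 3
      have hb : ∀ k, ∃ b : ℤ, s k = 1 + 2*b := by
        intro k; rcases hspm k with h'|h' <;> rw [h']
        exacts [⟨0, by ring⟩, ⟨-1, by ring⟩]
      obtain ⟨b0, hb0⟩ := hb 0
      obtain ⟨b1, hb1⟩ := hb 1
      obtain ⟨b2, hb2⟩ := hb 2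
      obtain ⟨b3, hb3⟩ := hb 3
      have hsumR : ((s 0 : ℝ)) + s 1 + s 2 + s 3 = 2 * (2 + ((b0:ℝ)+b1+b2+b3)) := by
        have : s 0 + s 1 + s 2 + s 3 = 2 * (2 + (b0+b1+b2+b3)) := by omega
        exact_mod_cast congrArg (fun z : ℤ => (z : ℝ)) this
      have hcint : 2 * (v ⬝ᵥ α) = ((s 0 * d0 + s 1 * d1 + s 2 * d2 + s 3 * d3
          + (2 + (b0+b1+b2+b3)) * n0 : ℤ) : ℝ) := by
        rw [dotProduct, Fin.sum_univ_four, hs 0, hs 1, hs 2, hs 3,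
          hd0, hd1, hd2, hd3]
        push_cast
        linear_combination (v 0) * hsumR + (2 + ((b0:ℝ)+b1+b2+b3)) * hn0
      intro i j
      obtain ⟨t, ht⟩ : ∃ t : ℤ, s i + s j = 2*t := by
        rcases hspm i with h'|h' <;> rcases hspm j with h''|h'' <;> rw [h', h'']
        exacts [⟨1, by ring⟩, ⟨0, by ring⟩, ⟨0, by ring⟩, ⟨-1, by ring⟩]
      refine ⟨(s 0 * d0 + s 1 * d1 + s 2 * d2 + s 3 * d3
          + (2 + (b0+b1+b2+b3)) * n0) * t, ?_⟩
      rw [hdot, div_one, hs i, hs j]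
      have htR : ((s i : ℝ)) + s j = 2 * t := by exact_mod_cast congrArg (fun z : ℤ => (z : ℝ)) ht
      push_cast
      push_cast at hcint
      linear_combination (((s i : ℝ))/2 + ((s j:ℝ))/2) * hcint
        + ((s 0 * d0 + s 1 * d1 + s 2 * d2 + s 3 * d3 : ℝ)
          + (2 + ((b0:ℝ)+b1+b2+b3)) * n0) * htR / 2
  intro i j
  obtain ⟨n, hn⟩ := hv i j
  obtain ⟨m, hm⟩ := key i j
  refine ⟨n - m, ?_⟩
  rw [reflLM_apply]
  simp only [Pi.sub_apply, Pi.smul_apply, smul_eq_mul]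
  push_cast
  linear_combination hn - hm

lemma closure_props {g : Module.End ℝ (Fin 4 → ℝ)}
    (hg : g ∈ Submonoid.closure {k : Module.End ℝ (Fin 4 → ℝ) | ∃ α ∈ F4Roots, k = reflLM α}) :
    (∀ u v, (g u) ⬝ᵥ (g v) = u ⬝ᵥ v) ∧ (∀ v, InL v → InL (g v)) := by
  induction hg using Submonoid.closure_induction with
  | mem x hx =>
    obtain ⟨α, hα, rfl⟩ := hx
    exact ⟨refl_dot α (F4_dot_self_ne α hα), fun v hv => refl_preserves_InL hα hv⟩
  | one => exact ⟨fun u v => rfl, fun v hv => hv⟩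
  | mul x y hx hy ihx ihy =>
    exact ⟨fun u v => (ihx.1 (y u) (y v)).trans (ihy.1 u v),
           fun v hv => ihx.2 _ (ihy.2 v hv)⟩

noncomputable def r1 : Fin 4 → ℝ := ![0,0,0,1]
noncomputable def r2 : Fin 4 → ℝ := ![1/2,-1/2,-1/2,-1/2]
noncomputable def r3 : Fin 4 → ℝ := ![1/2,-1/2,-1/2,1/2]
noncomputable def q1 : Fin 4 → ℝ := ![0,1,-1,0]
noncomputable def q2 : Fin 4 → ℝ := ![1,0,1,0]
noncomputable def q3 : Fin 4 → ℝ := ![1,1,0,0]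

lemma r1_mem : r1 ∈ F4Roots := by
  right; left
  refine ⟨by intro i; fin_cases i <;> norm_num [r1], ?_⟩
  have h : {i : Fin 4 | r1 i ≠ 0} = {3} := by
    ext i; fin_cases i <;> simp [r1]
  rw [h, Set.ncard_singleton]

lemma r2_mem : r2 ∈ F4Roots := by
  right; right; intro i; fin_cases i <;> norm_num [r2]

lemma r3_mem : r3 ∈ F4Roots := by
  right; right; intro i; fin_cases i <;> norm_num [r3]

lemma q1_mem : q1 ∈ F4Roots := by
  left
  refine ⟨by intro i; fin_cases i <;> norm_num [q1], ?_⟩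
  have h : {i : Fin 4 | q1 i ≠ 0} = {1, 2} := by
    ext i; fin_cases i <;> simp [q1]
  rw [h, Set.ncard_pair (by decide : (1 : Fin 4) ≠ 2)]

lemma q2_mem : q2 ∈ F4Roots := by
  left
  refine ⟨by intro i; fin_cases i <;> norm_num [q2], ?_⟩
  have h : {i : Fin 4 | q2 i ≠ 0} = {0, 2} := by
    ext i; fin_cases i <;> simp [q2]
  rw [h, Set.ncard_pair (by decide : (0 : Fin 4) ≠ 2)]

lemma q3_mem : q3 ∈ F4Roots := by
  left
  refine ⟨by intro i; fin_cases i <;> norm_num [q3], ?_⟩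
  have h : {i : Fin 4 | q3 i ≠ 0} = {0, 1} := by
    ext i; fin_cases i <;> simp [q3]
  rw [h, Set.ncard_pair (by decide : (0 : Fin 4) ≠ 1)]

lemma vec_ext {v w : Fin 4 → ℝ} (h0 : v 0 = w 0) (h1 : v 1 = w 1)
    (h2 : v 2 = w 2) (h3 : v 3 = w 3) : v = w := by
  funext i; fin_cases i <;> assumption

lemma S1_sub {v : Fin 4 → ℝ} (hv : v ∈ F4Roots)
    (hsp : v ∈ Submodule.span ℝ ({r1, r2} : Set (Fin 4 → ℝ))) :
    v = r1 ∨ v = -r1 ∨ v = r2 ∨ v = -r2 ∨ v = r3 ∨ v = -r3 := by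
  obtain ⟨a, b, hab⟩ := Submodule.mem_span_pair.mp hsp
  have e0 : v 0 = b/2 := by rw [← hab]; simp [r1, r2]; ring
  have e1 : v 1 = -(b/2) := by rw [← hab]; simp [r1, r2]; ring
  have e2 : v 2 = -(b/2) := by rw [← hab]; simp [r1, r2]; ring
  have h1 : v 1 = -(v 0) := by linarith
  have h2 : v 2 = -(v 0) := by linarith
  rcases hv with ⟨h, hc⟩|⟨h, hc⟩|h
  · -- two nonzero entries: impossible
    exfalso
    obtain ⟨x, y, hxy, hset⟩ := Set.ncard_eq_two.mp hc
    by_cases hv0 : v 0 = 0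
    · have hz1 : v 1 = 0 := by rw [h1, hv0]; ring
      have hz2 : v 2 = 0 := by rw [h2, hv0]; ring
      have hmem : ∀ k : Fin 4, v k ≠ 0 → k = 3 := by
        intro k hk; fin_cases k
        · exact absurd hv0 hk
        · exact absurd hz1 hk
        · exact absurd hz2 hk
        · rfl
      have hx' : v x ≠ 0 := by
        have : x ∈ {i | v i ≠ 0} := by rw [hset]; exact Set.mem_insert _ _
        exact this
      have hy' : v y ≠ 0 := by
        have : y ∈ {i | v i ≠ 0} := by rw [hset]; exact Set.mem_insert_of_mem _ rfl
        exact this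
      exact hxy ((hmem x hx').trans (hmem y hy').symm)
    · have hv1 : v 1 ≠ 0 := by rw [h1]; exact neg_ne_zero.mpr hv0
      have hv2 : v 2 ≠ 0 := by rw [h2]; exact neg_ne_zero.mpr hv0
      have m0 : (0 : Fin 4) = x ∨ (0 : Fin 4) = y := by
        have : (0 : Fin 4) ∈ ({x, y} : Set (Fin 4)) := by rw [← hset]; exact hv0
        simpa using this
      have m1 : (1 : Fin 4) = x ∨ (1 : Fin 4) = y := by
        have : (1 : Fin 4) ∈ ({x, y} : Set (Fin 4)) := by rw [← hset]; exact hv1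
        simpa using this
      have m2 : (2 : Fin 4) = x ∨ (2 : Fin 4) = y := by
        have : (2 : Fin 4) ∈ ({x, y} : Set (Fin 4)) := by rw [← hset]; exact hv2
        simpa using this
      rcases m0 with m0|m0 <;> rcases m1 with m1|m1 <;> rcases m2 with m2|m2
      · exact absurd (m0.trans m1.symm) (by decide)
      · exact absurd (m0.trans m1.symm) (by decide)
      · exact absurd (m0.trans m2.symm) (by decide)
      · exact absurd (m1.trans m2.symm) (by decide)
      · exact absurd (m1.trans m2.symm) (by decide)
      · exact absurd (m0.trans m2.symm) (by decide)
      · exact absurd (m0.trans m1.symm) (by decide)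
      · exact absurd (m0.trans m1.symm) (by decide)
  · -- one nonzero entry: v = ± r1
    obtain ⟨x, hx⟩ := Set.ncard_eq_one.mp hc
    by_cases hv0 : v 0 = 0
    · have hz1 : v 1 = 0 := by rw [h1, hv0]; ring
      have hz2 : v 2 = 0 := by rw [h2, hv0]; ring
      have h3ne : v 3 ≠ 0 := by
        intro h3
        have hxx : v x ≠ 0 := by
          have : x ∈ {i | v i ≠ 0} := by rw [hx]; rfl
          exact this
        fin_cases x
        · exact hxx hv0
        · exact hxx hz1
        · exact hxx hz2
        · exact hxx h3
      rcases h 3 with h3|h3|h3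
      · exact absurd h3 h3ne
      · exact Or.inl (vec_ext (by norm_num [r1]; linarith) (by norm_num [r1]; linarith)
          (by norm_num [r1]; linarith) (by norm_num [r1]; linarith))
      · exact Or.inr (Or.inl (vec_ext (by norm_num [r1]; linarith) (by norm_num [r1]; linarith)
          (by norm_num [r1]; linarith) (by norm_num [r1]; linarith)))
    · exfalso
      have hv1 : v 1 ≠ 0 := by rw [h1]; exact neg_ne_zero.mpr hv0
      have a0 : (0 : Fin 4) = x := by
        have : (0 : Fin 4) ∈ ({x} : Set (Fin 4)) := by rw [← hx]; exact hv0
        simpa using this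
      have a1 : (1 : Fin 4) = x := by
        have : (1 : Fin 4) ∈ ({x} : Set (Fin 4)) := by rw [← hx]; exact hv1
        simpa using this
      exact absurd (a0.trans a1.symm) (by decide)
  · -- half entries: v = ± r2 or ± r3
    have h0 := h 0
    have h3 := h 3
    rcases h0 with h0|h0 <;> rcases h3 with h3|h3
    · refine Or.inr (Or.inr (Or.inr (Or.inr (Or.inl (vec_ext ?_ ?_ ?_ ?_))))) <;>
        norm_num [r3] <;> linarith
    · refine Or.inr (Or.inr (Or.inl (vec_ext ?_ ?_ ?_ ?_))) <;>
        norm_num [r2] <;> linarith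
    · refine Or.inr (Or.inr (Or.inr (Or.inl (vec_ext ?_ ?_ ?_ ?_)))) <;>
        norm_num [r2] <;> linarith
    · refine Or.inr (Or.inr (Or.inr (Or.inr (Or.inr (vec_ext ?_ ?_ ?_ ?_))))) <;>
        norm_num [r3] <;> linarith

lemma S2_sub {v : Fin 4 → ℝ} (hv : v ∈ F4Roots)
    (hsp : v ∈ Submodule.span ℝ ({q1, q2} : Set (Fin 4 → ℝ))) :
    v = q1 ∨ v = -q1 ∨ v = q2 ∨ v = -q2 ∨ v = q3 ∨ v = -q3 := by
  obtain ⟨c, d, hab⟩ := Submodule.mem_span_pair.mp hsp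
  have e0 : v 0 = d := by rw [← hab]; simp [q1, q2]
  have e1 : v 1 = c := by rw [← hab]; simp [q1, q2]
  have e2 : v 2 = d - c := by rw [← hab]; simp [q1, q2]; ring
  have e3 : v 3 = 0 := by rw [← hab]; simp [q1, q2]
  have h2 : v 2 = v 0 - v 1 := by linarith
  rcases hv with ⟨h, hc⟩|⟨h, hc⟩|h
  · rcases h 0 with h0|h0|h0 <;> rcases h 1 with h1|h1|h1
    · exfalso
      obtain ⟨x, y, hxy, hset⟩ := Set.ncard_eq_two.mp hc
      have hz2 : v 2 = 0 := by rw [h2, h0, h1]; ring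
      have hx' : v x ≠ 0 := by
        have : x ∈ {i | v i ≠ 0} := by rw [hset]; exact Set.mem_insert _ _
        exact this
      fin_cases x
      · exact hx' h0
      · exact hx' h1
      · exact hx' hz2
      · exact hx' e3
    · refine Or.inl (vec_ext ?_ ?_ ?_ ?_) <;> norm_num [q1] <;> linarith
    · refine Or.inr (Or.inl (vec_ext ?_ ?_ ?_ ?_)) <;> norm_num [q1] <;> linarith
    · refine Or.inr (Or.inr (Or.inl (vec_ext ?_ ?_ ?_ ?_))) <;> norm_num [q2] <;> linarith
    · refine Or.inr (Or.inr (Or.inr (Or.inr (Or.inl (vec_ext ?_ ?_ ?_ ?_))))) <;>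
        norm_num [q3] <;> linarith
    · exfalso; rcases h 2 with h'|h'|h' <;> rw [h2, h0, h1] at h' <;> norm_num at h'
    · refine Or.inr (Or.inr (Or.inr (Or.inl (vec_ext ?_ ?_ ?_ ?_)))) <;>
        norm_num [q2] <;> linarith
    · exfalso; rcases h 2 with h'|h'|h' <;> rw [h2, h0, h1] at h' <;> norm_num at h'
    · refine Or.inr (Or.inr (Or.inr (Or.inr (Or.inr (vec_ext ?_ ?_ ?_ ?_))))) <;>
        norm_num [q3] <;> linarith
  · exfalso
    obtain ⟨x, hx⟩ := Set.ncard_eq_one.mp hc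
    have pc : ∀ i j : Fin 4, i ≠ j → v i ≠ 0 → v j ≠ 0 → False := by
      intro i j hij hi hj
      have hi' : i = x := by
        have : i ∈ ({x} : Set (Fin 4)) := by rw [← hx]; exact hi
        simpa using this
      have hj' : j = x := by
        have : j ∈ ({x} : Set (Fin 4)) := by rw [← hx]; exact hj
        simpa using this
      exact hij (hi'.trans hj'.symm)
    rcases h 0 with h0|h0|h0 <;> rcases h 1 with h1|h1|h1
    · have hz2 : v 2 = 0 := by rw [h2, h0, h1]; ring
      have hxx : v x ≠ 0 := by
        have : x ∈ {i | v i ≠ 0} := by rw [hx]; rfl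
        exact this
      fin_cases x
      · exact hxx h0
      · exact hxx h1
      · exact hxx hz2
      · exact hxx e3
    · exact pc 1 2 (by decide) (by rw [h1]; norm_num) (by rw [h2, h0, h1]; norm_num)
    · exact pc 1 2 (by decide) (by rw [h1]; norm_num) (by rw [h2, h0, h1]; norm_num)
    · exact pc 0 2 (by decide) (by rw [h0]; norm_num) (by rw [h2, h0, h1]; norm_num)
    · exact pc 0 1 (by decide) (by rw [h0]; norm_num) (by rw [h1]; norm_num)
    · rcases h 2 with h'|h'|h' <;> rw [h2, h0, h1] at h' <;> norm_num at h'
    · exact pc 0 2 (by decide) (by rw [h0]; norm_num) (by rw [h2, h0, h1]; norm_num)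
    · rcases h 2 with h'|h'|h' <;> rw [h2, h0, h1] at h' <;> norm_num at h'
    · exact pc 0 1 (by decide) (by rw [h0]; norm_num) (by rw [h1]; norm_num)
  · rcases h 3 with h'|h' <;> rw [e3] at h' <;> norm_num at h'

lemma reflLM_neg (α : Fin 4 → ℝ) : reflLM (-α) = reflLM α := by
  apply LinearMap.ext; intro v
  rw [reflLM_apply, reflLM_apply]
  funext i
  simp only [dotProduct_neg, neg_dotProduct, Pi.sub_apply, Pi.smul_apply,
    Pi.neg_apply, smul_eq_mul, neg_neg]
  ring

noncomputable def p1v : Fin 4 → ℝ := ![-1/3, 1/3, 1/3, 0]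
noncomputable def p2v : Fin 4 → ℝ := ![1/3, -1/3, 2/3, 0]
noncomputable def e3v : Fin 4 → ℝ := ![0, 0, 1, 0]

lemma e3_split : e3v = p1v + p2v := by
  refine vec_ext ?_ ?_ ?_ ?_ <;> norm_num [e3v, p1v, p2v]

lemma p1_span : p1v = (-1/3 : ℝ) • r1 + (-2/3 : ℝ) • r2 := by
  refine vec_ext ?_ ?_ ?_ ?_ <;> norm_num [p1v, r1, r2]

lemma p2_span : p2v = (-1/3 : ℝ) • q1 + (1/3 : ℝ) • q2 := by
  refine vec_ext ?_ ?_ ?_ ?_ <;> norm_num [p2v, q1, q2]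

lemma e3_InL : InL e3v := by
  intro i j
  fin_cases i <;> fin_cases j
  · exact ⟨0, by norm_num [e3v]⟩
  · exact ⟨0, by norm_num [e3v]⟩
  · exact ⟨1, by norm_num [e3v]⟩
  · exact ⟨0, by norm_num [e3v]⟩
  · exact ⟨0, by norm_num [e3v]⟩
  · exact ⟨0, by norm_num [e3v]⟩
  · exact ⟨1, by norm_num [e3v]⟩
  · exact ⟨0, by norm_num [e3v]⟩
  · exact ⟨1, by norm_num [e3v]⟩
  · exact ⟨1, by norm_num [e3v]⟩
  · exact ⟨2, by norm_num [e3v]⟩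
  · exact ⟨1, by norm_num [e3v]⟩
  · exact ⟨0, by norm_num [e3v]⟩
  · exact ⟨0, by norm_num [e3v]⟩
  · exact ⟨1, by norm_num [e3v]⟩
  · exact ⟨0, by norm_num [e3v]⟩

-- basic reflection computations
lemma rA : reflLM q1 p2v = p2v + (1:ℝ) • q1 + (0:ℝ) • q2 := by
  rw [reflLM_apply]
  refine vec_ext ?_ ?_ ?_ ?_ <;>
    norm_num [q1, q2, p2v, dotProduct, Fin.sum_univ_four]

lemma rB : reflLM q1 q1 = (-1:ℝ) • q1 + (0:ℝ) • q2 := by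
  rw [reflLM_apply]
  refine vec_ext ?_ ?_ ?_ ?_ <;>
    norm_num [q1, q2, dotProduct, Fin.sum_univ_four]

lemma rC : reflLM q1 q2 = (1:ℝ) • q1 + (1:ℝ) • q2 := by
  rw [reflLM_apply]
  refine vec_ext ?_ ?_ ?_ ?_ <;>
    norm_num [q1, q2, dotProduct, Fin.sum_univ_four]

lemma rD : reflLM q2 p2v = p2v + (0:ℝ) • q1 + (-1:ℝ) • q2 := by
  rw [reflLM_apply]
  refine vec_ext ?_ ?_ ?_ ?_ <;>
    norm_num [q1, q2, p2v, dotProduct, Fin.sum_univ_four]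

lemma rE : reflLM q2 q1 = (1:ℝ) • q1 + (1:ℝ) • q2 := by
  rw [reflLM_apply]
  refine vec_ext ?_ ?_ ?_ ?_ <;>
    norm_num [q1, q2, dotProduct, Fin.sum_univ_four]

lemma rF : reflLM q2 q2 = (0:ℝ) • q1 + (-1:ℝ) • q2 := by
  rw [reflLM_apply]
  refine vec_ext ?_ ?_ ?_ ?_ <;>
    norm_num [q1, q2, dotProduct, Fin.sum_univ_four]

lemma rG : reflLM q3 p2v = p2v + (0:ℝ) • q1 + (0:ℝ) • q2 := by
  rw [reflLM_apply]
  refine vec_ext ?_ ?_ ?_ ?_ <;>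
    norm_num [q1, q2, q3, p2v, dotProduct, Fin.sum_univ_four]

lemma rH : reflLM q3 q1 = (0:ℝ) • q1 + (-1:ℝ) • q2 := by
  rw [reflLM_apply]
  refine vec_ext ?_ ?_ ?_ ?_ <;>
    norm_num [q1, q2, q3, dotProduct, Fin.sum_univ_four]

lemma rI : reflLM q3 q2 = (-1:ℝ) • q1 + (0:ℝ) • q2 := by
  rw [reflLM_apply]
  refine vec_ext ?_ ?_ ?_ ?_ <;>
    norm_num [q1, q2, q3, dotProduct, Fin.sum_univ_four]

lemma sA : reflLM r1 p1v = p1v + (0:ℝ) • r1 + (0:ℝ) • r2 := by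
  rw [reflLM_apply]
  refine vec_ext ?_ ?_ ?_ ?_ <;>
    norm_num [r1, r2, p1v, dotProduct, Fin.sum_univ_four]

lemma sB : reflLM r1 r1 = (-1:ℝ) • r1 + (0:ℝ) • r2 := by
  rw [reflLM_apply]
  refine vec_ext ?_ ?_ ?_ ?_ <;>
    norm_num [r1, r2, dotProduct, Fin.sum_univ_four]

lemma sC : reflLM r1 r2 = (1:ℝ) • r1 + (1:ℝ) • r2 := by
  rw [reflLM_apply]
  refine vec_ext ?_ ?_ ?_ ?_ <;>
    norm_num [r1, r2, dotProduct, Fin.sum_univ_four]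

lemma sD : reflLM r2 p1v = p1v + (0:ℝ) • r1 + (1:ℝ) • r2 := by
  rw [reflLM_apply]
  refine vec_ext ?_ ?_ ?_ ?_ <;>
    norm_num [r1, r2, p1v, dotProduct, Fin.sum_univ_four]

lemma sE : reflLM r2 r1 = (1:ℝ) • r1 + (1:ℝ) • r2 := by
  rw [reflLM_apply]
  refine vec_ext ?_ ?_ ?_ ?_ <;>
    norm_num [r1, r2, dotProduct, Fin.sum_univ_four]

lemma sF : reflLM r2 r2 = (0:ℝ) • r1 + (-1:ℝ) • r2 := by
  rw [reflLM_apply]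
  refine vec_ext ?_ ?_ ?_ ?_ <;>
    norm_num [r1, r2, dotProduct, Fin.sum_univ_four]

lemma sG : reflLM r3 p1v = p1v + (1:ℝ) • r1 + (1:ℝ) • r2 := by
  rw [reflLM_apply]
  refine vec_ext ?_ ?_ ?_ ?_ <;>
    norm_num [r1, r2, r3, p1v, dotProduct, Fin.sum_univ_four]

lemma sH : reflLM r3 r1 = (0:ℝ) • r1 + (-1:ℝ) • r2 := by
  rw [reflLM_apply]
  refine vec_ext ?_ ?_ ?_ ?_ <;>
    norm_num [r1, r2, r3, dotProduct, Fin.sum_univ_four]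

lemma sI : reflLM r3 r2 = (-1:ℝ) • r1 + (0:ℝ) • r2 := by
  rw [reflLM_apply]
  refine vec_ext ?_ ?_ ?_ ?_ <;>
    norm_num [r1, r2, r3, dotProduct, Fin.sum_univ_four]


lemma r3_eq : r3 = r1 + r2 := by
  refine vec_ext ?_ ?_ ?_ ?_ <;> norm_num [r1, r2, r3]

lemma q3_eq : q3 = q1 + q2 := by
  refine vec_ext ?_ ?_ ?_ ?_ <;> norm_num [q1, q2, q3]

lemma c11 : reflLM r1 r1 = -r1 := by rw [sB]; module
lemma c12 : reflLM r1 r2 = r3 := by rw [sC, r3_eq]; module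
lemma c21 : reflLM r2 r1 = r3 := by rw [sE, r3_eq]; module
lemma c22 : reflLM r2 r2 = -r2 := by rw [sF]; module
lemma c31 : reflLM r3 r1 = -r2 := by rw [sH]; module
lemma c32 : reflLM r3 r2 = -r1 := by rw [sI]; module
lemma c121 : (reflLM r1 * reflLM r2) r1 = r2 := by
  show reflLM r1 (reflLM r2 r1) = r2
  rw [c21, r3_eq, map_add, c11, c12, r3_eq]; module
lemma c122 : (reflLM r1 * reflLM r2) r2 = -r3 := by
  show reflLM r1 (reflLM r2 r2) = -r3
  rw [c22, map_neg, c12]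
lemma c211 : (reflLM r2 * reflLM r1) r1 = -r3 := by
  show reflLM r2 (reflLM r1 r1) = -r3
  rw [c11, map_neg, c21]
lemma c212 : (reflLM r2 * reflLM r1) r2 = r1 := by
  show reflLM r2 (reflLM r1 r2) = r1
  rw [c12, r3_eq, map_add, c21, c22, r3_eq]; module

lemma d11 : reflLM q1 q1 = -q1 := by rw [rB]; module
lemma d12 : reflLM q1 q2 = q3 := by rw [rC, q3_eq]; module
lemma d21 : reflLM q2 q1 = q3 := by rw [rE, q3_eq]; module
lemma d22 : reflLM q2 q2 = -q2 := by rw [rF]; module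
lemma d31 : reflLM q3 q1 = -q2 := by rw [rH]; module
lemma d32 : reflLM q3 q2 = -q1 := by rw [rI]; module
lemma d121 : (reflLM q1 * reflLM q2) q1 = q2 := by
  show reflLM q1 (reflLM q2 q1) = q2
  rw [d21, q3_eq, map_add, d11, d12, q3_eq]; module
lemma d122 : (reflLM q1 * reflLM q2) q2 = -q3 := by
  show reflLM q1 (reflLM q2 q2) = -q3
  rw [d22, map_neg, d12]
lemma d211 : (reflLM q2 * reflLM q1) q1 = -q3 := by
  show reflLM q2 (reflLM q1 q1) = -q3
  rw [d11, map_neg, d21]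
lemma d212 : (reflLM q2 * reflLM q1) q2 = q1 := by
  show reflLM q2 (reflLM q1 q2) = q1
  rw [d12, q3_eq, map_add, d21, d22, q3_eq]; module

lemma inner_coset2 {h : Module.End ℝ (Fin 4 → ℝ)}
    (hh : h ∈ Submonoid.closure
      {k : Module.End ℝ (Fin 4 → ℝ) | ∃ γ ∈ F4Roots ∩ (Submodule.span ℝ ({q1, q2} : Set (Fin 4 → ℝ)) : Set (Fin 4 → ℝ)), k = reflLM γ}) :
    (∃ a b : ℤ, h p2v = p2v + (a:ℝ) • q1 + (b:ℝ) • q2) ∧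
    (∃ a b : ℤ, h q1 = (a:ℝ) • q1 + (b:ℝ) • q2) ∧
    (∃ a b : ℤ, h q2 = (a:ℝ) • q1 + (b:ℝ) • q2) := by
  induction hh using Submonoid.closure_induction with
  | mem k hk =>
    obtain ⟨γ, ⟨hγF, hγsp⟩, rfl⟩ := hk
    rcases S2_sub hγF hγsp with h'|h'|h'|h'|h'|h' <;> subst h' <;> try rw [reflLM_neg]
    · exact ⟨⟨1, 0, by push_cast; exact rA⟩, ⟨-1, 0, by push_cast; exact rB⟩,
        ⟨1, 1, by push_cast; exact rC⟩⟩
    · exact ⟨⟨1, 0, by push_cast; exact rA⟩, ⟨-1, 0, by push_cast; exact rB⟩,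
        ⟨1, 1, by push_cast; exact rC⟩⟩
    · exact ⟨⟨0, -1, by push_cast; exact rD⟩, ⟨1, 1, by push_cast; exact rE⟩,
        ⟨0, -1, by push_cast; exact rF⟩⟩
    · exact ⟨⟨0, -1, by push_cast; exact rD⟩, ⟨1, 1, by push_cast; exact rE⟩,
        ⟨0, -1, by push_cast; exact rF⟩⟩
    · exact ⟨⟨0, 0, by push_cast; exact rG⟩, ⟨0, -1, by push_cast; exact rH⟩,
        ⟨-1, 0, by push_cast; exact rI⟩⟩
    · exact ⟨⟨0, 0, by push_cast; exact rG⟩, ⟨0, -1, by push_cast; exact rH⟩,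
        ⟨-1, 0, by push_cast; exact rI⟩⟩
  | one =>
    refine ⟨⟨0, 0, ?_⟩, ⟨1, 0, ?_⟩, ⟨0, 1, ?_⟩⟩ <;>
      (rw [Module.End.one_apply]; push_cast; module)
  | mul x y hx hy ihx ihy =>
    obtain ⟨⟨a, b, hp⟩, ⟨c, d, h1⟩, ⟨e, f, h2⟩⟩ := ihx
    obtain ⟨⟨a', b', hp'⟩, ⟨c', d', h1'⟩, ⟨e', f', h2'⟩⟩ := ihy
    refine ⟨⟨a + a'*c + b'*e, b + a'*d + b'*f, ?_⟩,
            ⟨c'*c + d'*e, c'*d + d'*f, ?_⟩,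
            ⟨e'*c + f'*e, e'*d + f'*f, ?_⟩⟩
    · have hxy : (x * y) p2v = x (y p2v) := rfl
      rw [hxy, hp', map_add, map_add, LinearMap.map_smul, LinearMap.map_smul, hp, h1, h2]
      push_cast; module
    · have hxy : (x * y) q1 = x (y q1) := rfl
      rw [hxy, h1', map_add, LinearMap.map_smul, LinearMap.map_smul, h1, h2]
      push_cast; module
    · have hxy : (x * y) q2 = x (y q2) := rfl
      rw [hxy, h2', map_add, LinearMap.map_smul, LinearMap.map_smul, h1, h2]
      push_cast; module

lemma inner_coset1 {h : Module.End ℝ (Fin 4 → ℝ)}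
    (hh : h ∈ Submonoid.closure
      {k : Module.End ℝ (Fin 4 → ℝ) | ∃ γ ∈ F4Roots ∩ (Submodule.span ℝ ({r1, r2} : Set (Fin 4 → ℝ)) : Set (Fin 4 → ℝ)), k = reflLM γ}) :
    (∃ a b : ℤ, h p1v = p1v + (a:ℝ) • r1 + (b:ℝ) • r2) ∧
    (∃ a b : ℤ, h r1 = (a:ℝ) • r1 + (b:ℝ) • r2) ∧
    (∃ a b : ℤ, h r2 = (a:ℝ) • r1 + (b:ℝ) • r2) := by
  induction hh using Submonoid.closure_induction with
  | mem k hk =>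
    obtain ⟨γ, ⟨hγF, hγsp⟩, rfl⟩ := hk
    rcases S1_sub hγF hγsp with h'|h'|h'|h'|h'|h' <;> subst h' <;> try rw [reflLM_neg]
    · exact ⟨⟨0, 0, by push_cast; exact sA⟩, ⟨-1, 0, by push_cast; exact sB⟩,
        ⟨1, 1, by push_cast; exact sC⟩⟩
    · exact ⟨⟨0, 0, by push_cast; exact sA⟩, ⟨-1, 0, by push_cast; exact sB⟩,
        ⟨1, 1, by push_cast; exact sC⟩⟩
    · exact ⟨⟨0, 1, by push_cast; exact sD⟩, ⟨1, 1, by push_cast; exact sE⟩,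
        ⟨0, -1, by push_cast; exact sF⟩⟩
    · exact ⟨⟨0, 1, by push_cast; exact sD⟩, ⟨1, 1, by push_cast; exact sE⟩,
        ⟨0, -1, by push_cast; exact sF⟩⟩
    · exact ⟨⟨1, 1, by push_cast; exact sG⟩, ⟨0, -1, by push_cast; exact sH⟩,
        ⟨-1, 0, by push_cast; exact sI⟩⟩
    · exact ⟨⟨1, 1, by push_cast; exact sG⟩, ⟨0, -1, by push_cast; exact sH⟩,
        ⟨-1, 0, by push_cast; exact sI⟩⟩
  | one =>
    refine ⟨⟨0, 0, ?_⟩, ⟨1, 0, ?_⟩, ⟨0, 1, ?_⟩⟩ <;>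
      (rw [Module.End.one_apply]; push_cast; module)
  | mul x y hx hy ihx ihy =>
    obtain ⟨⟨a, b, hp⟩, ⟨c, d, h1⟩, ⟨e, f, h2⟩⟩ := ihx
    obtain ⟨⟨a', b', hp'⟩, ⟨c', d', h1'⟩, ⟨e', f', h2'⟩⟩ := ihy
    refine ⟨⟨a + a'*c + b'*e, b + a'*d + b'*f, ?_⟩,
            ⟨c'*c + d'*e, c'*d + d'*f, ?_⟩,
            ⟨e'*c + f'*e, e'*d + f'*f, ?_⟩⟩
    · have hxy : (x * y) p1v = x (y p1v) := rfl
      rw [hxy, hp', map_add, map_add, LinearMap.map_smul, LinearMap.map_smul, hp, h1, h2]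
      push_cast; module
    · have hxy : (x * y) r1 = x (y r1) := rfl
      rw [hxy, h1', map_add, LinearMap.map_smul, LinearMap.map_smul, h1, h2]
      push_cast; module
    · have hxy : (x * y) r2 = x (y r2) := rfl
      rw [hxy, h2', map_add, LinearMap.map_smul, LinearMap.map_smul, h1, h2]
      push_cast; module


lemma hr1T' : r1 ∈ F4Roots ∩ (Submodule.span ℝ ({r1, r2} : Set (Fin 4 → ℝ)) : Set (Fin 4 → ℝ)) := ⟨r1_mem, Submodule.subset_span (Set.mem_insert _ _)⟩
lemma hr2T' : r2 ∈ F4Roots ∩ (Submodule.span ℝ ({r1, r2} : Set (Fin 4 → ℝ)) : Set (Fin 4 → ℝ)) := ⟨r2_mem, Submodule.subset_span (Set.mem_insert_of_mem _ rfl)⟩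
lemma hr3T' : r3 ∈ F4Roots ∩ (Submodule.span ℝ ({r1, r2} : Set (Fin 4 → ℝ)) : Set (Fin 4 → ℝ)) := ⟨r3_mem, by
  rw [r3_eq]
  exact Submodule.add_mem _ (Submodule.subset_span (Set.mem_insert _ _))
    (Submodule.subset_span (Set.mem_insert_of_mem _ rfl))⟩
lemma hq1T' : q1 ∈ F4Roots ∩ (Submodule.span ℝ ({q1, q2} : Set (Fin 4 → ℝ)) : Set (Fin 4 → ℝ)) := ⟨q1_mem, Submodule.subset_span (Set.mem_insert _ _)⟩
lemma hq2T' : q2 ∈ F4Roots ∩ (Submodule.span ℝ ({q1, q2} : Set (Fin 4 → ℝ)) : Set (Fin 4 → ℝ)) := ⟨q2_mem, Submodule.subset_span (Set.mem_insert_of_mem _ rfl)⟩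
lemma hq3T' : q3 ∈ F4Roots ∩ (Submodule.span ℝ ({q1, q2} : Set (Fin 4 → ℝ)) : Set (Fin 4 → ℝ)) := ⟨q3_mem, by
  rw [q3_eq]
  exact Submodule.add_mem _ (Submodule.subset_span (Set.mem_insert _ _))
    (Submodule.subset_span (Set.mem_insert_of_mem _ rfl))⟩

lemma side1 {g : Module.End ℝ (Fin 4 → ℝ)}
    (hg : g ∈ Submonoid.closure {k : Module.End ℝ (Fin 4 → ℝ) | ∃ α ∈ F4Roots, k = reflLM α}) :
    ¬ (ActsOuterOn g (F4Roots ∩ (Submodule.span ℝ ({r1, r2} : Set (Fin 4 → ℝ)) : Set (Fin 4 → ℝ))) ∧ ActsInnerOn g (F4Roots ∩ (Submodule.span ℝ ({q1, q2} : Set (Fin 4 → ℝ)) : Set (Fin 4 → ℝ)))) := by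
  rintro ⟨⟨hmap, hnotinner⟩, hinner⟩
  obtain ⟨horth, hlat⟩ := closure_props hg
  have hr1T := hr1T'
  have hr2T := hr2T'
  have hr3T := hr3T'
  have hxmem := hmap r1 hr1T
  have hymem := hmap r2 hr2T
  have hxcases := S1_sub hxmem.1 hxmem.2
  have hycases := S1_sub hymem.1 hymem.2
  have hdot : (g r1) ⬝ᵥ (g r2) = -(1/2) := by
    rw [horth r1 r2]; norm_num [r1, r2, dotProduct, Fin.sum_univ_four]
  obtain ⟨h, hh, hagree⟩ := hinner
  have hp2span : p2v ∈ Submodule.span ℝ (F4Roots ∩ (Submodule.span ℝ ({q1, q2} : Set (Fin 4 → ℝ)) : Set (Fin 4 → ℝ))) := by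
    rw [p2_span]
    exact Submodule.add_mem _ (Submodule.smul_mem _ _ (Submodule.subset_span hq1T'))
      (Submodule.smul_mem _ _ (Submodule.subset_span hq2T'))
  obtain ⟨⟨a, b, hp⟩, -, -⟩ := inner_coset2 hh
  have hge3 : g e3v = (-1/3 : ℝ) • (g r1) + (-2/3 : ℝ) • (g r2)
      + (p2v + (a:ℝ) • q1 + (b:ℝ) • q2) := by
    rw [e3_split, map_add]
    congr 1
    · rw [p1_span, map_add, LinearMap.map_smul, LinearMap.map_smul]
    · rw [hagree _ hp2span, hp]
  have hcoord : (g e3v) 0 = -1/3 * ((g r1) 0) + -2/3 * ((g r2) 0) + (1/3 + (b:ℝ)) := by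
    rw [hge3]
    simp [p2v, q1, q2]
    try ring
  obtain ⟨n, hn⟩ := (hlat e3v e3_InL) 0 0
  have build : ∀ h' : Module.End ℝ (Fin 4 → ℝ),
      h' ∈ Submonoid.closure {k : Module.End ℝ (Fin 4 → ℝ) | ∃ γ ∈ F4Roots ∩ (Submodule.span ℝ ({r1, r2} : Set (Fin 4 → ℝ)) : Set (Fin 4 → ℝ)), k = reflLM γ} →
      h' r1 = g r1 → h' r2 = g r2 → False := by
    intro h' hmem e1 e2
    refine hnotinner ⟨h', hmem, ?_⟩
    intro v hv
    have hv' : v ∈ Submodule.span ℝ ({r1, r2} : Set (Fin 4 → ℝ)) :=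
      (Submodule.span_le.mpr Set.inter_subset_right) hv
    obtain ⟨aa, bb, hab⟩ := Submodule.mem_span_pair.mp hv'
    rw [← hab, map_add, map_add, LinearMap.map_smul, LinearMap.map_smul,
      LinearMap.map_smul, LinearMap.map_smul, e1, e2]
  rcases hxcases with hx'|hx'|hx'|hx'|hx'|hx' <;>
    rcases hycases with hy'|hy'|hy'|hy'|hy'|hy'
  · rw [hx', hy'] at hdot
    norm_num [r1, r2, r3, dotProduct, Fin.sum_univ_four] at hdot
  · rw [hx', hy'] at hdot
    norm_num [r1, r2, r3, dotProduct, Fin.sum_univ_four] at hdot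
  · exact build ((1 : Module.End ℝ (Fin 4 → ℝ))) (Submonoid.one_mem _) (by rw [hx']; exact Module.End.one_apply r1) (by rw [hy']; exact Module.End.one_apply r2)
  · rw [hx', hy'] at hdot
    norm_num [r1, r2, r3, dotProduct, Fin.sum_univ_four] at hdot
  · rw [hx', hy'] at hdot
    norm_num [r1, r2, r3, dotProduct, Fin.sum_univ_four] at hdot
  · have hx0 : (g (r1 : Fin 4 → ℝ)) 0 = (0 : ℝ) := by rw [hx']; norm_num [r1]
    have hy0 : (g (r2 : Fin 4 → ℝ)) 0 = (-1/2 : ℝ) := by rw [hy']; norm_num [r3]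
    have hZR : (3:ℝ)*(n:ℝ) - 6*(b:ℝ) = 4 := by linarith [hcoord, hn, hx0, hy0]
    have hZ : (3:ℤ)*n - 6*b = 4 := by exact_mod_cast hZR
    omega
  · rw [hx', hy'] at hdot
    norm_num [r1, r2, r3, dotProduct, Fin.sum_univ_four] at hdot
  · rw [hx', hy'] at hdot
    norm_num [r1, r2, r3, dotProduct, Fin.sum_univ_four] at hdot
  · rw [hx', hy'] at hdot
    norm_num [r1, r2, r3, dotProduct, Fin.sum_univ_four] at hdot
  · have hx0 : (g (r1 : Fin 4 → ℝ)) 0 = (0 : ℝ) := by rw [hx']; norm_num [r1]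
    have hy0 : (g (r2 : Fin 4 → ℝ)) 0 = (-1/2 : ℝ) := by rw [hy']; norm_num [r2]
    have hZR : (3:ℝ)*(n:ℝ) - 6*(b:ℝ) = 4 := by linarith [hcoord, hn, hx0, hy0]
    have hZ : (3:ℤ)*n - 6*b = 4 := by exact_mod_cast hZR
    omega
  · exact build (reflLM r1) (Submonoid.subset_closure ⟨r1, hr1T, rfl⟩) (by rw [hx']; exact c11) (by rw [hy']; exact c12)
  · rw [hx', hy'] at hdot
    norm_num [r1, r2, r3, dotProduct, Fin.sum_univ_four] at hdot
  · have hx0 : (g (r1 : Fin 4 → ℝ)) 0 = (1/2 : ℝ) := by rw [hx']; norm_num [r2]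
    have hy0 : (g (r2 : Fin 4 → ℝ)) 0 = (0 : ℝ) := by rw [hy']; norm_num [r1]
    have hZR : (3:ℝ)*(n:ℝ) - 6*(b:ℝ) = 1 := by linarith [hcoord, hn, hx0, hy0]
    have hZ : (3:ℤ)*n - 6*b = 1 := by exact_mod_cast hZR
    omega
  · rw [hx', hy'] at hdot
    norm_num [r1, r2, r3, dotProduct, Fin.sum_univ_four] at hdot
  · rw [hx', hy'] at hdot
    norm_num [r1, r2, r3, dotProduct, Fin.sum_univ_four] at hdot
  · rw [hx', hy'] at hdot
    norm_num [r1, r2, r3, dotProduct, Fin.sum_univ_four] at hdot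
  · rw [hx', hy'] at hdot
    norm_num [r1, r2, r3, dotProduct, Fin.sum_univ_four] at hdot
  · exact build (reflLM r1 * reflLM r2) (mul_mem (Submonoid.subset_closure ⟨r1, hr1T, rfl⟩) (Submonoid.subset_closure ⟨r2, hr2T, rfl⟩)) (by rw [hx']; exact c121) (by rw [hy']; exact c122)
  · rw [hx', hy'] at hdot
    norm_num [r1, r2, r3, dotProduct, Fin.sum_univ_four] at hdot
  · exact build (reflLM r3) (Submonoid.subset_closure ⟨r3, hr3T, rfl⟩) (by rw [hx']; exact c31) (by rw [hy']; exact c32)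
  · rw [hx', hy'] at hdot
    norm_num [r1, r2, r3, dotProduct, Fin.sum_univ_four] at hdot
  · rw [hx', hy'] at hdot
    norm_num [r1, r2, r3, dotProduct, Fin.sum_univ_four] at hdot
  · have hx0 : (g (r1 : Fin 4 → ℝ)) 0 = (-1/2 : ℝ) := by rw [hx']; norm_num [r2]
    have hy0 : (g (r2 : Fin 4 → ℝ)) 0 = (1/2 : ℝ) := by rw [hy']; norm_num [r3]
    have hZR : (3:ℝ)*(n:ℝ) - 6*(b:ℝ) = 1 := by linarith [hcoord, hn, hx0, hy0]
    have hZ : (3:ℤ)*n - 6*b = 1 := by exact_mod_cast hZR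
    omega
  · rw [hx', hy'] at hdot
    norm_num [r1, r2, r3, dotProduct, Fin.sum_univ_four] at hdot
  · rw [hx', hy'] at hdot
    norm_num [r1, r2, r3, dotProduct, Fin.sum_univ_four] at hdot
  · have hx0 : (g (r1 : Fin 4 → ℝ)) 0 = (1/2 : ℝ) := by rw [hx']; norm_num [r3]
    have hy0 : (g (r2 : Fin 4 → ℝ)) 0 = (0 : ℝ) := by rw [hy']; norm_num [r1]
    have hZR : (3:ℝ)*(n:ℝ) - 6*(b:ℝ) = 1 := by linarith [hcoord, hn, hx0, hy0]
    have hZ : (3:ℤ)*n - 6*b = 1 := by exact_mod_cast hZR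
    omega
  · rw [hx', hy'] at hdot
    norm_num [r1, r2, r3, dotProduct, Fin.sum_univ_four] at hdot
  · exact build (reflLM r2) (Submonoid.subset_closure ⟨r2, hr2T, rfl⟩) (by rw [hx']; exact c21) (by rw [hy']; exact c22)
  · rw [hx', hy'] at hdot
    norm_num [r1, r2, r3, dotProduct, Fin.sum_univ_four] at hdot
  · rw [hx', hy'] at hdot
    norm_num [r1, r2, r3, dotProduct, Fin.sum_univ_four] at hdot
  · exact build (reflLM r2 * reflLM r1) (mul_mem (Submonoid.subset_closure ⟨r2, hr2T, rfl⟩) (Submonoid.subset_closure ⟨r1, hr1T, rfl⟩)) (by rw [hx']; exact c211) (by rw [hy']; exact c212)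
  · rw [hx', hy'] at hdot
    norm_num [r1, r2, r3, dotProduct, Fin.sum_univ_four] at hdot
  · have hx0 : (g (r1 : Fin 4 → ℝ)) 0 = (-1/2 : ℝ) := by rw [hx']; norm_num [r3]
    have hy0 : (g (r2 : Fin 4 → ℝ)) 0 = (1/2 : ℝ) := by rw [hy']; norm_num [r2]
    have hZR : (3:ℝ)*(n:ℝ) - 6*(b:ℝ) = 1 := by linarith [hcoord, hn, hx0, hy0]
    have hZ : (3:ℤ)*n - 6*b = 1 := by exact_mod_cast hZR
    omega
  · rw [hx', hy'] at hdot
    norm_num [r1, r2, r3, dotProduct, Fin.sum_univ_four] at hdot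
  · rw [hx', hy'] at hdot
    norm_num [r1, r2, r3, dotProduct, Fin.sum_univ_four] at hdot
  · rw [hx', hy'] at hdot
    norm_num [r1, r2, r3, dotProduct, Fin.sum_univ_four] at hdot

lemma side2 {g : Module.End ℝ (Fin 4 → ℝ)}
    (hg : g ∈ Submonoid.closure {k : Module.End ℝ (Fin 4 → ℝ) | ∃ α ∈ F4Roots, k = reflLM α}) :
    ¬ (ActsInnerOn g (F4Roots ∩ (Submodule.span ℝ ({r1, r2} : Set (Fin 4 → ℝ)) : Set (Fin 4 → ℝ))) ∧ ActsOuterOn g (F4Roots ∩ (Submodule.span ℝ ({q1, q2} : Set (Fin 4 → ℝ)) : Set (Fin 4 → ℝ)))) := by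
  rintro ⟨hinner, ⟨hmap, hnotinner⟩⟩
  obtain ⟨horth, hlat⟩ := closure_props hg
  have hq1T := hq1T'
  have hq2T := hq2T'
  have hq3T := hq3T'
  have hxmem := hmap q1 hq1T
  have hymem := hmap q2 hq2T
  have hxcases := S2_sub hxmem.1 hxmem.2
  have hycases := S2_sub hymem.1 hymem.2
  have hdot : (g q1) ⬝ᵥ (g q2) = -1 := by
    rw [horth q1 q2]; norm_num [q1, q2, dotProduct, Fin.sum_univ_four]
  obtain ⟨h, hh, hagree⟩ := hinner
  have hp1span : p1v ∈ Submodule.span ℝ (F4Roots ∩ (Submodule.span ℝ ({r1, r2} : Set (Fin 4 → ℝ)) : Set (Fin 4 → ℝ))) := by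
    rw [p1_span]
    exact Submodule.add_mem _ (Submodule.smul_mem _ _ (Submodule.subset_span hr1T'))
      (Submodule.smul_mem _ _ (Submodule.subset_span hr2T'))
  obtain ⟨⟨a, b, hp⟩, -, -⟩ := inner_coset1 hh
  have hge3 : g e3v = (p1v + (a:ℝ) • r1 + (b:ℝ) • r2)
      + ((-1/3 : ℝ) • (g q1) + (1/3 : ℝ) • (g q2)) := by
    rw [e3_split, map_add]
    congr 1
    · rw [hagree _ hp1span, hp]
    · rw [p2_span, map_add, LinearMap.map_smul, LinearMap.map_smul]
  have hcoord : (g e3v) 0 = (-1/3 + (b:ℝ) * (1/2)) + (-1/3 * ((g q1) 0) + 1/3 * ((g q2) 0)) := by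
    rw [hge3]
    simp [p1v, r1, r2]
    try ring
  obtain ⟨n, hn⟩ := (hlat e3v e3_InL) 0 0
  have build : ∀ h' : Module.End ℝ (Fin 4 → ℝ),
      h' ∈ Submonoid.closure {k : Module.End ℝ (Fin 4 → ℝ) | ∃ γ ∈ F4Roots ∩ (Submodule.span ℝ ({q1, q2} : Set (Fin 4 → ℝ)) : Set (Fin 4 → ℝ)), k = reflLM γ} →
      h' q1 = g q1 → h' q2 = g q2 → False := by
    intro h' hmem e1 e2
    refine hnotinner ⟨h', hmem, ?_⟩
    intro v hv
    have hv' : v ∈ Submodule.span ℝ ({q1, q2} : Set (Fin 4 → ℝ)) :=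
      (Submodule.span_le.mpr Set.inter_subset_right) hv
    obtain ⟨aa, bb, hab⟩ := Submodule.mem_span_pair.mp hv'
    rw [← hab, map_add, map_add, LinearMap.map_smul, LinearMap.map_smul,
      LinearMap.map_smul, LinearMap.map_smul, e1, e2]
  rcases hxcases with hx'|hx'|hx'|hx'|hx'|hx' <;>
    rcases hycases with hy'|hy'|hy'|hy'|hy'|hy'
  · rw [hx', hy'] at hdot
    norm_num [q1, q2, q3, dotProduct, Fin.sum_univ_four] at hdot
  · rw [hx', hy'] at hdot
    norm_num [q1, q2, q3, dotProduct, Fin.sum_univ_four] at hdot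
  · exact build ((1 : Module.End ℝ (Fin 4 → ℝ))) (Submonoid.one_mem _) (by rw [hx']; exact Module.End.one_apply q1) (by rw [hy']; exact Module.End.one_apply q2)
  · rw [hx', hy'] at hdot
    norm_num [q1, q2, q3, dotProduct, Fin.sum_univ_four] at hdot
  · rw [hx', hy'] at hdot
    norm_num [q1, q2, q3, dotProduct, Fin.sum_univ_four] at hdot
  · have hx0 : (g (q1 : Fin 4 → ℝ)) 0 = (0 : ℝ) := by rw [hx']; norm_num [q1]
    have hy0 : (g (q2 : Fin 4 → ℝ)) 0 = (-1 : ℝ) := by rw [hy']; norm_num [q3]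
    have hZR : (3:ℝ)*(n:ℝ) - 3*(b:ℝ) = -4 := by linarith [hcoord, hn, hx0, hy0]
    have hZ : (3:ℤ)*n - 3*b = -4 := by exact_mod_cast hZR
    omega
  · rw [hx', hy'] at hdot
    norm_num [q1, q2, q3, dotProduct, Fin.sum_univ_four] at hdot
  · rw [hx', hy'] at hdot
    norm_num [q1, q2, q3, dotProduct, Fin.sum_univ_four] at hdot
  · rw [hx', hy'] at hdot
    norm_num [q1, q2, q3, dotProduct, Fin.sum_univ_four] at hdot
  · have hx0 : (g (q1 : Fin 4 → ℝ)) 0 = (0 : ℝ) := by rw [hx']; norm_num [q1]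
    have hy0 : (g (q2 : Fin 4 → ℝ)) 0 = (-1 : ℝ) := by rw [hy']; norm_num [q2]
    have hZR : (3:ℝ)*(n:ℝ) - 3*(b:ℝ) = -4 := by linarith [hcoord, hn, hx0, hy0]
    have hZ : (3:ℤ)*n - 3*b = -4 := by exact_mod_cast hZR
    omega
  · exact build (reflLM q1) (Submonoid.subset_closure ⟨q1, hq1T, rfl⟩) (by rw [hx']; exact d11) (by rw [hy']; exact d12)
  · rw [hx', hy'] at hdot
    norm_num [q1, q2, q3, dotProduct, Fin.sum_univ_four] at hdot
  · have hx0 : (g (q1 : Fin 4 → ℝ)) 0 = (1 : ℝ) := by rw [hx']; norm_num [q2]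
    have hy0 : (g (q2 : Fin 4 → ℝ)) 0 = (0 : ℝ) := by rw [hy']; norm_num [q1]
    have hZR : (3:ℝ)*(n:ℝ) - 3*(b:ℝ) = -4 := by linarith [hcoord, hn, hx0, hy0]
    have hZ : (3:ℤ)*n - 3*b = -4 := by exact_mod_cast hZR
    omega
  · rw [hx', hy'] at hdot
    norm_num [q1, q2, q3, dotProduct, Fin.sum_univ_four] at hdot
  · rw [hx', hy'] at hdot
    norm_num [q1, q2, q3, dotProduct, Fin.sum_univ_four] at hdot
  · rw [hx', hy'] at hdot
    norm_num [q1, q2, q3, dotProduct, Fin.sum_univ_four] at hdot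
  · rw [hx', hy'] at hdot
    norm_num [q1, q2, q3, dotProduct, Fin.sum_univ_four] at hdot
  · exact build (reflLM q1 * reflLM q2) (mul_mem (Submonoid.subset_closure ⟨q1, hq1T, rfl⟩) (Submonoid.subset_closure ⟨q2, hq2T, rfl⟩)) (by rw [hx']; exact d121) (by rw [hy']; exact d122)
  · rw [hx', hy'] at hdot
    norm_num [q1, q2, q3, dotProduct, Fin.sum_univ_four] at hdot
  · exact build (reflLM q3) (Submonoid.subset_closure ⟨q3, hq3T, rfl⟩) (by rw [hx']; exact d31) (by rw [hy']; exact d32)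
  · rw [hx', hy'] at hdot
    norm_num [q1, q2, q3, dotProduct, Fin.sum_univ_four] at hdot
  · rw [hx', hy'] at hdot
    norm_num [q1, q2, q3, dotProduct, Fin.sum_univ_four] at hdot
  · have hx0 : (g (q1 : Fin 4 → ℝ)) 0 = (-1 : ℝ) := by rw [hx']; norm_num [q2]
    have hy0 : (g (q2 : Fin 4 → ℝ)) 0 = (1 : ℝ) := by rw [hy']; norm_num [q3]
    have hZR : (3:ℝ)*(n:ℝ) - 3*(b:ℝ) = 2 := by linarith [hcoord, hn, hx0, hy0]
    have hZ : (3:ℤ)*n - 3*b = 2 := by exact_mod_cast hZR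
    omega
  · rw [hx', hy'] at hdot
    norm_num [q1, q2, q3, dotProduct, Fin.sum_univ_four] at hdot
  · rw [hx', hy'] at hdot
    norm_num [q1, q2, q3, dotProduct, Fin.sum_univ_four] at hdot
  · have hx0 : (g (q1 : Fin 4 → ℝ)) 0 = (1 : ℝ) := by rw [hx']; norm_num [q3]
    have hy0 : (g (q2 : Fin 4 → ℝ)) 0 = (0 : ℝ) := by rw [hy']; norm_num [q1]
    have hZR : (3:ℝ)*(n:ℝ) - 3*(b:ℝ) = -4 := by linarith [hcoord, hn, hx0, hy0]
    have hZ : (3:ℤ)*n - 3*b = -4 := by exact_mod_cast hZR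
    omega
  · rw [hx', hy'] at hdot
    norm_num [q1, q2, q3, dotProduct, Fin.sum_univ_four] at hdot
  · exact build (reflLM q2) (Submonoid.subset_closure ⟨q2, hq2T, rfl⟩) (by rw [hx']; exact d21) (by rw [hy']; exact d22)
  · rw [hx', hy'] at hdot
    norm_num [q1, q2, q3, dotProduct, Fin.sum_univ_four] at hdot
  · rw [hx', hy'] at hdot
    norm_num [q1, q2, q3, dotProduct, Fin.sum_univ_four] at hdot
  · exact build (reflLM q2 * reflLM q1) (mul_mem (Submonoid.subset_closure ⟨q2, hq2T, rfl⟩) (Submonoid.subset_closure ⟨q1, hq1T, rfl⟩)) (by rw [hx']; exact d211) (by rw [hy']; exact d212)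
  · rw [hx', hy'] at hdot
    norm_num [q1, q2, q3, dotProduct, Fin.sum_univ_four] at hdot
  · have hx0 : (g (q1 : Fin 4 → ℝ)) 0 = (-1 : ℝ) := by rw [hx']; norm_num [q3]
    have hy0 : (g (q2 : Fin 4 → ℝ)) 0 = (1 : ℝ) := by rw [hy']; norm_num [q2]
    have hZR : (3:ℝ)*(n:ℝ) - 3*(b:ℝ) = 2 := by linarith [hcoord, hn, hx0, hy0]
    have hZ : (3:ℤ)*n - 3*b = 2 := by exact_mod_cast hZR
    omega
  · rw [hx', hy'] at hdot
    norm_num [q1, q2, q3, dotProduct, Fin.sum_univ_four] at hdot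
  · rw [hx', hy'] at hdot
    norm_num [q1, q2, q3, dotProduct, Fin.sum_univ_four] at hdot
  · rw [hx', hy'] at hdot
    norm_num [q1, q2, q3, dotProduct, Fin.sum_univ_four] at hdot


/-- In the Weyl group of `F₄` (generated by the reflections in the
roots), no element acts as an outer automorphism on the `A₂`-subsystem
`R ∩ span(α₃,α₄)` while acting as an inner automorphism on the orthogonal
`A₂`-subsystem `R ∩ span(α₁,β)`, nor vice versa. -/
theorem stmt15 :
    let α₁ : Fin 4 → ℝ := ![0, 1, -1, 0]
    let α₂ : Fin 4 → ℝ := ![0, 0, 1, -1]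
    let α₃ : Fin 4 → ℝ := ![0, 0, 0, 1]
    let α₄ : Fin 4 → ℝ := ![1 / 2, -1 / 2, -1 / 2, -1 / 2]
    let β : Fin 4 → ℝ := α₁ + (3 : ℝ) • α₂ + (4 : ℝ) • α₃ + (2 : ℝ) • α₄
    let S₁ : Set (Fin 4 → ℝ) := F4Roots ∩ (Submodule.span ℝ {α₃, α₄} : Set (Fin 4 → ℝ))
    let S₂ : Set (Fin 4 → ℝ) := F4Roots ∩ (Submodule.span ℝ {α₁, β} : Set (Fin 4 → ℝ))
    ∀ g ∈ Submonoid.closure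
        {k : Module.End ℝ (Fin 4 → ℝ) | ∃ α ∈ F4Roots, k = reflLM α},
      ¬ (ActsOuterOn g S₁ ∧ ActsInnerOn g S₂) ∧
      ¬ (ActsInnerOn g S₁ ∧ ActsOuterOn g S₂) := by
  intro α₁ α₂ α₃ α₄ β S₁ S₂
  intro g hg
  have e1 : α₁ = q1 := rfl
  have e3 : α₃ = r1 := rfl
  have e4 : α₄ = r2 := rfl
  have ha2 : α₂ = ![0, 0, 1, -1] := rfl
  have e2 : β = q2 := by
    show α₁ + (3 : ℝ) • α₂ + (4 : ℝ) • α₃ + (2 : ℝ) • α₄ = q2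
    rw [e1, ha2, e3, e4]
    refine vec_ext ?_ ?_ ?_ ?_ <;> norm_num [q1, q2, r1, r2]
  have hS1 : S₁ = F4Roots ∩ (Submodule.span ℝ ({r1, r2} : Set (Fin 4 → ℝ)) : Set (Fin 4 → ℝ)) := by
    show F4Roots ∩ (Submodule.span ℝ ({α₃, α₄} : Set (Fin 4 → ℝ)) : Set (Fin 4 → ℝ)) = _
    rw [e3, e4]
  have hS2 : S₂ = F4Roots ∩ (Submodule.span ℝ ({q1, q2} : Set (Fin 4 → ℝ)) : Set (Fin 4 → ℝ)) := by
    show F4Roots ∩ (Submodule.span ℝ ({α₁, β} : Set (Fin 4 → ℝ)) : Set (Fin 4 → ℝ)) = _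
    rw [e1, e2]
  rw [hS1, hS2]
  exact ⟨side1 hg, side2 hg⟩
end
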